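/- arXiv:1310.8248 — 4 statements merged into one kernel-verified Lean document; each statement's English description precedes it below -/
import Mathlib

section
/- Let λ ∈ (0,1), D⁺, D⁻ > 0, α = α(λ), T > 0, and let u₀ ∈ W². Then there exists a constant C > 0 such that for all t ∈ (0,T], sup_{x ≠ 0} |∂u/∂x(t,x)| ≤ (C/√t)·(‖u₀′‖_{L¹(ℝ)} + ‖u₀″‖_{L¹(ℝ)}), where u(t,x) = ∫_ℝ u₀(y)·q^α(t,x,y) dy. -/
open MeasureTheory Real Filter Set

noncomputable def phiK (t z : ℝ) : ℝ :=
  (Real.sqrt (2 * Real.pi * t))⁻¹ * Real.exp (-(z ^ 2) / (2 * t))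

noncomputable def pSkew (α t x y : ℝ) : ℝ :=
  if 0 < x ∧ 0 < y then phiK t (y - x) + (2 * α - 1) * phiK t (x + y)
  else if x < 0 ∧ y < 0 then phiK t (y - x) - (2 * α - 1) * phiK t (x + y)
  else if x ≤ 0 ∧ 0 < y then 2 * α * phiK t (y - x)
  else 2 * (1 - α) * phiK t (y - x)

noncomputable def Dfun (Dp Dm x : ℝ) : ℝ := if 0 < x then Dp else Dm

noncomputable def qSkew (Dp Dm α t x y : ℝ) : ℝ :=
  (Real.sqrt (Dfun Dp Dm y))⁻¹ *
    pSkew α t (x / Real.sqrt (Dfun Dp Dm x)) (y / Real.sqrt (Dfun Dp Dm y))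

noncomputable def alphaOf (lam Dp Dm : ℝ) : ℝ :=
  lam * Real.sqrt Dm / (lam * Real.sqrt Dm + (1 - lam) * Real.sqrt Dp)

/-- Membership of `u₀` in the class `W²`, witnessed by its first two derivatives
`g1 = u₀′` and `g2 = u₀″` away from the interface at `0`. -/
def MemW2 (lam : ℝ) (u₀ g1 g2 : ℝ → ℝ) : Prop :=
  Continuous u₀ ∧
  (∀ x : ℝ, x ≠ 0 → HasDerivAt u₀ (g1 x) x) ∧
  (∀ x : ℝ, x ≠ 0 → HasDerivAt g1 (g2 x) x) ∧
  ContinuousOn g2 {(0 : ℝ)}ᶜ ∧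
  (∃ M : ℝ, ∀ x : ℝ, x ≠ 0 → |u₀ x| ≤ M ∧ |g1 x| ≤ M ∧ |g2 x| ≤ M) ∧
  Integrable g1 ∧ Integrable g2 ∧ MemLp g1 2 ∧ MemLp g2 2 ∧
  (∃ Lp Lm : ℝ, Tendsto g1 (nhdsWithin 0 (Ioi 0)) (nhds Lp) ∧
    Tendsto g1 (nhdsWithin 0 (Iio 0)) (nhds Lm) ∧ lam * Lp = (1 - lam) * Lm)

noncomputable def dphi (t u : ℝ) : ℝ := u / t * phiK t u

lemma phiK_nonneg (t u : ℝ) : 0 ≤ phiK t u :=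
  mul_nonneg (inv_nonneg.2 (Real.sqrt_nonneg _)) (Real.exp_pos _).le

lemma phiK_even (t u : ℝ) : phiK t (-u) = phiK t u := by
  simp [phiK, neg_sq]

lemma continuous_phiK (t : ℝ) : Continuous (phiK t) := by
  unfold phiK; fun_prop

lemma continuous_dphi (t : ℝ) : Continuous (dphi t) := by
  unfold dphi phiK; fun_prop

lemma HasDerivAt.phiK_comp {g : ℝ → ℝ} {g' z : ℝ} (t : ℝ) (hg : HasDerivAt g g' z) :
    HasDerivAt (fun w => phiK t (g w)) (-(dphi t (g z)) * g') z := by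
  have h1 : HasDerivAt (fun w => -(g w ^ 2) / (2 * t))
      (-((2 : ℕ) * g z ^ (2 - 1) * g') / (2 * t)) z := ((hg.pow 2).neg).div_const _
  have h2 := (h1.exp).const_mul ((Real.sqrt (2 * Real.pi * t))⁻¹)
  refine h2.congr_deriv ?_
  simp only [dphi, phiK]
  push_cast
  ring

lemma hasDerivAt_phiK1 (t c a z : ℝ) :
    HasDerivAt (fun z => phiK t (c - z / a)) (a⁻¹ * dphi t (c - z / a)) z := by
  have hg : HasDerivAt (fun z : ℝ => c - z / a) (-(1 / a)) z :=
    ((hasDerivAt_id z).div_const a).const_sub c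
  have := HasDerivAt.phiK_comp t hg
  convert this using 1
  ring

lemma hasDerivAt_phiK2 (t c a z : ℝ) :
    HasDerivAt (fun z => phiK t (z / a + c)) (-(a⁻¹ * dphi t (z / a + c))) z := by
  have hg : HasDerivAt (fun z : ℝ => z / a + c) (1 / a) z :=
    ((hasDerivAt_id z).div_const a).add_const c
  have := HasDerivAt.phiK_comp t hg
  convert this using 1
  ring

lemma abs_mul_exp_le (t u : ℝ) (ht : 0 < t) :
    |u| * Real.exp (-(u ^ 2) / (4 * t)) ≤ Real.sqrt (2 * t) := by
  set s := Real.sqrt (2 * t) with hs'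
  have hs : 0 < s := Real.sqrt_pos.2 (by linarith)
  have hs2 : s ^ 2 = 2 * t := Real.sq_sqrt (by linarith)
  have hE : 1 + u ^ 2 / (4 * t) ≤ Real.exp (u ^ 2 / (4 * t)) := by
    have := Real.add_one_le_exp (u ^ 2 / (4 * t)); linarith
  have hq : u ^ 2 / (2 * s ^ 2) = u ^ 2 / (4 * t) := by rw [hs2]; ring
  have h5 : |u| ≤ s + u ^ 2 / (2 * s) := by
    have h6 : |u| * (2 * s) ≤ (s + u ^ 2 / (2 * s)) * (2 * s) := by
      have h7 : (s + u ^ 2 / (2 * s)) * (2 * s) = 2 * s ^ 2 + u ^ 2 := by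
        field_simp
      rw [h7]; nlinarith [sq_nonneg (s - |u|), sq_abs u]
    exact le_of_mul_le_mul_right h6 (by positivity)
  have key : |u| ≤ s * Real.exp (u ^ 2 / (4 * t)) := by
    have h8 : s + u ^ 2 / (2 * s) = s * (1 + u ^ 2 / (4 * t)) := by
      rw [← hq]; field_simp
    calc |u| ≤ s + u ^ 2 / (2 * s) := h5
      _ = s * (1 + u ^ 2 / (4 * t)) := h8
      _ ≤ s * Real.exp (u ^ 2 / (4 * t)) := mul_le_mul_of_nonneg_left hE hs.le
  calc |u| * Real.exp (-(u ^ 2) / (4 * t))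
      ≤ (s * Real.exp (u ^ 2 / (4 * t))) * Real.exp (-(u ^ 2) / (4 * t)) := by
        exact mul_le_mul_of_nonneg_right key (Real.exp_pos _).le
    _ = s := by
        rw [mul_assoc, ← Real.exp_add, show u ^ 2 / (4 * t) + -(u ^ 2) / (4 * t) = 0 by ring,
          Real.exp_zero, mul_one]

lemma dphi_abs_le (t u : ℝ) (ht : 0 < t) :
    |dphi t u| ≤ Real.sqrt (2 * t) / t *
      ((Real.sqrt (2 * Real.pi * t))⁻¹ * Real.exp (-(u ^ 2) / (4 * t))) := by
  have hc : (0:ℝ) ≤ (Real.sqrt (2 * Real.pi * t))⁻¹ :=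
    inv_nonneg.2 (Real.sqrt_nonneg _)
  have h1 : |dphi t u| = |u| / t * ((Real.sqrt (2 * Real.pi * t))⁻¹ *
      Real.exp (-(u ^ 2) / (2 * t))) := by
    rw [dphi, phiK, abs_mul, abs_div, abs_of_pos ht, abs_of_nonneg
      (mul_nonneg hc (Real.exp_pos _).le)]
  have h2 : Real.exp (-(u ^ 2) / (2 * t)) =
      Real.exp (-(u ^ 2) / (4 * t)) * Real.exp (-(u ^ 2) / (4 * t)) := by
    rw [← Real.exp_add]; congr 1; ring
  rw [h1, h2]
  have key := abs_mul_exp_le t u ht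
  have hEn : (0:ℝ) ≤ (Real.sqrt (2 * Real.pi * t))⁻¹ * Real.exp (-(u ^ 2) / (4 * t)) :=
    mul_nonneg hc (Real.exp_pos _).le
  calc |u| / t * ((Real.sqrt (2 * Real.pi * t))⁻¹ *
        (Real.exp (-(u ^ 2) / (4 * t)) * Real.exp (-(u ^ 2) / (4 * t))))
      = (|u| * Real.exp (-(u ^ 2) / (4 * t))) *
        ((Real.sqrt (2 * Real.pi * t))⁻¹ * Real.exp (-(u ^ 2) / (4 * t))) / t := by ring
    _ ≤ Real.sqrt (2 * t) * ((Real.sqrt (2 * Real.pi * t))⁻¹ *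
        Real.exp (-(u ^ 2) / (4 * t))) / t := by gcongr
    _ = Real.sqrt (2 * t) / t * ((Real.sqrt (2 * Real.pi * t))⁻¹ *
        Real.exp (-(u ^ 2) / (4 * t))) := by ring

lemma exp_shift (t w s S : ℝ) (ht : 0 < t) (hs : s ^ 2 ≤ S ^ 2) :
    Real.exp (-((w + s) ^ 2) / (4 * t)) ≤
      Real.exp (S ^ 2 / (4 * t)) * Real.exp (-(w ^ 2) / (8 * t)) := by
  rw [← Real.exp_add]
  apply Real.exp_le_exp.2
  have h : -((w + s) ^ 2) / (4 * t) - (S ^ 2 / (4 * t) + -(w ^ 2) / (8 * t)) =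
      (-((w + 2 * s) ^ 2) + 2 * (s ^ 2 - S ^ 2)) / (8 * t) := by ring
  have hnum : -((w + 2 * s) ^ 2) + 2 * (s ^ 2 - S ^ 2) ≤ 0 := by
    nlinarith [sq_nonneg (w + 2 * s)]
  have h2 : (-((w + 2 * s) ^ 2) + 2 * (s ^ 2 - S ^ 2)) / (8 * t) ≤ 0 :=
    div_nonpos_of_nonpos_of_nonneg hnum (by linarith)
  linarith

lemma phiK_shift (t w s S : ℝ) (ht : 0 < t) (hs : s ^ 2 ≤ S ^ 2) :
    phiK t (w + s) ≤ (Real.sqrt (2 * Real.pi * t))⁻¹ *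
      (Real.exp (S ^ 2 / (4 * t)) * Real.exp (-(w ^ 2) / (8 * t))) := by
  have hc : (0:ℝ) ≤ (Real.sqrt (2 * Real.pi * t))⁻¹ :=
    inv_nonneg.2 (Real.sqrt_nonneg _)
  apply mul_le_mul_of_nonneg_left _ hc
  calc Real.exp (-((w + s) ^ 2) / (2 * t)) ≤ Real.exp (-((w + s) ^ 2) / (4 * t)) := by
        apply Real.exp_le_exp.2
        have h2 : (0:ℝ) ≤ (w + s) ^ 2 := sq_nonneg _
        rw [div_le_div_iff₀ (by linarith) (by linarith)]
        nlinarith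
    _ ≤ _ := exp_shift t w s S ht hs

lemma dphi_shift (t w s S : ℝ) (ht : 0 < t) (hs : s ^ 2 ≤ S ^ 2) :
    |dphi t (w + s)| ≤ Real.sqrt (2 * t) / t * (Real.sqrt (2 * Real.pi * t))⁻¹ *
      Real.exp (S ^ 2 / (4 * t)) * Real.exp (-(w ^ 2) / (8 * t)) := by
  calc |dphi t (w + s)| ≤ Real.sqrt (2 * t) / t *
        ((Real.sqrt (2 * Real.pi * t))⁻¹ * Real.exp (-((w + s) ^ 2) / (4 * t))) :=
        dphi_abs_le t (w + s) ht
    _ ≤ Real.sqrt (2 * t) / t * ((Real.sqrt (2 * Real.pi * t))⁻¹ *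
        (Real.exp (S ^ 2 / (4 * t)) * Real.exp (-(w ^ 2) / (8 * t)))) := by
        have h9 := exp_shift t w s S ht hs
        have h10 : (0:ℝ) ≤ Real.sqrt (2 * t) / t := by positivity
        have h11 : (0:ℝ) ≤ (Real.sqrt (2 * Real.pi * t))⁻¹ :=
          inv_nonneg.2 (Real.sqrt_nonneg _)
        exact mul_le_mul_of_nonneg_left (mul_le_mul_of_nonneg_left h9 h11) h10
    _ = _ := by ring

lemma integrable_gauss_div (t c : ℝ) (ht : 0 < t) (hc : 0 < c) :
    Integrable (fun y : ℝ => Real.exp (-((y / c) ^ 2) / (8 * t))) := by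
  have h : ∀ y : ℝ, -((y / c) ^ 2) / (8 * t) = -(1 / (8 * c ^ 2 * t)) * y ^ 2 := by
    intro y; ring
  simp_rw [h]
  exact integrable_exp_neg_mul_sq (by positivity)

lemma integrable_dphi_comp (t a c : ℝ) (ht : 0 < t) (ha : 0 < a) :
    Integrable (fun y : ℝ => dphi t (y / a + c)) := by
  apply Integrable.mono ((integrable_gauss_div t a ht ha).const_mul
    (Real.sqrt (2 * t) / t * (Real.sqrt (2 * Real.pi * t))⁻¹ * Real.exp (c ^ 2 / (4 * t))))
  · exact ((continuous_dphi t).comp (by fun_prop)).aestronglyMeasurable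
  · apply ae_of_all
    intro y
    have h1 := dphi_shift t (y / a) c c ht le_rfl
    have h2 : (0:ℝ) ≤ Real.sqrt (2 * t) / t * (Real.sqrt (2 * Real.pi * t))⁻¹ *
        Real.exp (c ^ 2 / (4 * t)) * Real.exp (-((y / a) ^ 2) / (8 * t)) := by positivity
    simp only [Real.norm_eq_abs]
    rw [abs_of_nonneg h2]
    exact h1

lemma integrable_abs_dphi_comp (t a c : ℝ) (ht : 0 < t) (ha : 0 < a) :
    Integrable (fun y : ℝ => |dphi t (y / a + c)|) :=
  (integrable_dphi_comp t a c ht ha).abs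

lemma integrable_dphi (t : ℝ) (ht : 0 < t) : Integrable (dphi t) := by
  have := integrable_dphi_comp t 1 0 ht one_pos
  simpa using this

lemma tendsto_phiK_sq {t : ℝ} {v : ℝ → ℝ} {l : Filter ℝ} (ht : 0 < t)
    (hv : Tendsto (fun y => (v y) ^ 2) l atTop) :
    Tendsto (fun y => phiK t (v y)) l (nhds 0) := by
  have h1 : Tendsto (fun y => -((v y) ^ 2)) l atBot := tendsto_neg_atTop_atBot.comp hv
  have h2 : Tendsto (fun y => -((v y) ^ 2) / (2 * t)) l atBot := by
    exact h1.atBot_div_const (by linarith)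
  have h3 := (Real.tendsto_exp_atBot).comp h2
  have h4 := h3.const_mul ((Real.sqrt (2 * Real.pi * t))⁻¹)
  simpa [phiK, Function.comp] using h4

lemma hasDerivAt_negphiK (t u : ℝ) : HasDerivAt (fun u => -phiK t u) (dphi t u) u := by
  have h := (HasDerivAt.phiK_comp t (hasDerivAt_id u)).neg
  refine h.congr_deriv ?_
  simp

lemma tendsto_vsq_atTop (a c : ℝ) (ha : 0 < a) :
    Tendsto (fun y : ℝ => (y / a + c) ^ 2) atTop atTop :=
  (tendsto_pow_atTop two_ne_zero).comp
    (tendsto_atTop_add_const_right _ c (tendsto_id.atTop_div_const ha))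

lemma tendsto_vsq_atBot (a c : ℝ) (ha : 0 < a) :
    Tendsto (fun y : ℝ => (y / a + c) ^ 2) atBot atTop := by
  have h1 : Tendsto (fun y : ℝ => -(y / a + c)) atBot atTop := by
    have h2 : Tendsto (fun y : ℝ => y / a + c) atBot atBot :=
      tendsto_atBot_add_const_right _ c (tendsto_id.atBot_div_const ha)
    exact tendsto_neg_atBot_atTop.comp h2
  have h3 := (tendsto_pow_atTop (two_ne_zero)).comp h1
  have h4 : (fun y : ℝ => (-(y / a + c)) ^ 2) = fun y : ℝ => (y / a + c) ^ 2 := by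
    funext y; rw [neg_sq]
  rw [← h4]
  exact h3

lemma integral_dphi_Ioi_shift (t a c : ℝ) (ht : 0 < t) (ha : 0 < a) :
    ∫ y in Ioi (0:ℝ), dphi t (y / a + c) = a * phiK t c := by
  have hderiv : ∀ y ∈ Ioi (0:ℝ), HasDerivAt (fun y => -(a * phiK t (y / a + c)))
      (dphi t (y / a + c)) y := by
    intro y _
    have h := ((hasDerivAt_phiK2 t c a y).const_mul a).neg
    refine h.congr_deriv ?_
    field_simp
  have hcont : ContinuousWithinAt (fun y => -(a * phiK t (y / a + c))) (Ici (0:ℝ)) 0 := by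
    apply Continuous.continuousWithinAt
    exact (continuous_const.mul ((continuous_phiK t).comp (by fun_prop))).neg
  have htend : Tendsto (fun y => -(a * phiK t (y / a + c))) atTop (nhds 0) := by
    have h1 := tendsto_phiK_sq (v := fun y : ℝ => y / a + c) (l := atTop) ht
      (tendsto_vsq_atTop a c ha)
    have h2 := (h1.const_mul a).neg
    simpa using h2
  have h := integral_Ioi_of_hasDerivAt_of_tendsto hcont hderiv
    ((integrable_dphi_comp t a c ht ha).integrableOn) htend
  rw [h]
  simp

lemma integral_dphi_Iic_shift (t a c : ℝ) (ht : 0 < t) (ha : 0 < a) :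
    ∫ y in Iic (0:ℝ), dphi t (y / a + c) = -(a * phiK t c) := by
  have hderiv : ∀ y ∈ Iio (0:ℝ), HasDerivAt (fun y => -(a * phiK t (y / a + c)))
      (dphi t (y / a + c)) y := by
    intro y _
    have h := ((hasDerivAt_phiK2 t c a y).const_mul a).neg
    refine h.congr_deriv ?_
    field_simp
  have hcont : ContinuousWithinAt (fun y => -(a * phiK t (y / a + c))) (Iic (0:ℝ)) 0 := by
    apply Continuous.continuousWithinAt
    exact (continuous_const.mul ((continuous_phiK t).comp (by fun_prop))).neg
  have htend : Tendsto (fun y => -(a * phiK t (y / a + c))) atBot (nhds 0) := by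
    have h1 := tendsto_phiK_sq (v := fun y : ℝ => y / a + c) (l := atBot) ht
      (tendsto_vsq_atBot a c ha)
    have h2 := (h1.const_mul a).neg
    simpa using h2
  have h := integral_Iic_of_hasDerivAt_of_tendsto hcont hderiv
    ((integrable_dphi_comp t a c ht ha).integrableOn) htend
  rw [h]
  simp

lemma integral_dphi_Ioi (t : ℝ) (ht : 0 < t) : ∫ u in Ioi (0:ℝ), dphi t u = phiK t 0 := by
  have h := integral_dphi_Ioi_shift t 1 0 ht one_pos
  simpa using h

lemma integral_negdphi_Iic (t : ℝ) (ht : 0 < t) :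
    ∫ u in Iic (0:ℝ), -dphi t u = phiK t 0 := by
  have h := integral_dphi_Iic_shift t 1 0 ht one_pos
  have h2 : ∫ u in Iic (0:ℝ), dphi t u = -phiK t 0 := by simpa using h
  rw [integral_neg, h2, neg_neg]

lemma integral_abs_dphi (t : ℝ) (ht : 0 < t) : ∫ u : ℝ, |dphi t u| = 2 * phiK t 0 := by
  have hint : Integrable (fun u => |dphi t u|) := (integrable_dphi t ht).abs
  rw [← integral_add_compl (measurableSet_Ioi : MeasurableSet (Ioi (0:ℝ))) hint, compl_Ioi]
  have h1 : ∫ u in Ioi (0:ℝ), |dphi t u| = ∫ u in Ioi (0:ℝ), dphi t u := by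
    apply setIntegral_congr_fun measurableSet_Ioi
    intro u hu
    exact abs_of_nonneg (mul_nonneg (div_nonneg (le_of_lt hu) ht.le) (phiK_nonneg t u))
  have h2 : ∫ u in Iic (0:ℝ), |dphi t u| = ∫ u in Iic (0:ℝ), -dphi t u := by
    apply setIntegral_congr_fun measurableSet_Iic
    intro u hu
    exact abs_of_nonpos (mul_nonpos_of_nonpos_of_nonneg
      (div_nonpos_of_nonpos_of_nonneg hu ht.le) (phiK_nonneg t u))
  rw [h1, h2, integral_dphi_Ioi t ht, integral_negdphi_Iic t ht]
  ring

lemma integral_abs_dphi_shift (t a c : ℝ) (ht : 0 < t) (ha : 0 < a) :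
    ∫ y : ℝ, |dphi t (y / a + c)| = a * (2 * phiK t 0) := by
  have h : (fun y : ℝ => |dphi t (y / a + c)|) = fun y : ℝ => |dphi t ((y + a * c) / a)| := by
    funext y; congr 2; field_simp
  rw [h, integral_add_right_eq_self (fun u : ℝ => |dphi t (u / a)|) (a * c),
    MeasureTheory.Measure.integral_comp_div (fun u => |dphi t u|) a,
    integral_abs_dphi t ht, smul_eq_mul, abs_of_pos ha]

noncomputable def kerF (Dp Dm α t z y : ℝ) : ℝ :=
  if 0 < y then (Real.sqrt Dp)⁻¹ * (phiK t (y / Real.sqrt Dp - z / Real.sqrt Dp) +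
      (2 * α - 1) * phiK t (z / Real.sqrt Dp + y / Real.sqrt Dp))
  else (Real.sqrt Dm)⁻¹ * (2 * (1 - α) * phiK t (y / Real.sqrt Dm - z / Real.sqrt Dp))

noncomputable def kerD (Dp Dm α t z y : ℝ) : ℝ :=
  if 0 < y then (Real.sqrt Dp)⁻¹ * ((Real.sqrt Dp)⁻¹ *
      dphi t (y / Real.sqrt Dp - z / Real.sqrt Dp) -
      (2 * α - 1) * ((Real.sqrt Dp)⁻¹ * dphi t (z / Real.sqrt Dp + y / Real.sqrt Dp)))
  else (Real.sqrt Dm)⁻¹ * (2 * (1 - α) *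
      ((Real.sqrt Dp)⁻¹ * dphi t (y / Real.sqrt Dm - z / Real.sqrt Dp)))

lemma q_eq (Dp Dm α t z y : ℝ) (hDp : 0 < Dp) (hDm : 0 < Dm) (hz : 0 < z) :
    qSkew Dp Dm α t z y = kerF Dp Dm α t z y := by
  have ha : 0 < Real.sqrt Dp := Real.sqrt_pos.2 hDp
  have hb : 0 < Real.sqrt Dm := Real.sqrt_pos.2 hDm
  have hz' : 0 < z / Real.sqrt Dp := div_pos hz ha
  rw [qSkew, kerF]
  have hDz : Dfun Dp Dm z = Dp := if_pos hz
  by_cases hy : 0 < y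
  · have hDy : Dfun Dp Dm y = Dp := if_pos hy
    rw [hDz, hDy, if_pos hy, pSkew, if_pos ⟨hz', div_pos hy ha⟩]
  · have hDy : Dfun Dp Dm y = Dm := if_neg hy
    have hy' : ¬ 0 < y / Real.sqrt Dm := by
      rw [not_lt] at hy ⊢
      exact div_nonpos_of_nonpos_of_nonneg hy hb.le
    rw [hDz, hDy, if_neg hy, pSkew, if_neg (fun h => hy' h.2),
      if_neg (fun h => absurd h.1 (not_lt.2 hz'.le)),
      if_neg (fun h => absurd h.1 (not_le.2 hz'))]

lemma hasDerivAt_kerF (Dp Dm α t y z : ℝ) (hDp : 0 < Dp) :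
    HasDerivAt (fun z => kerF Dp Dm α t z y) (kerD Dp Dm α t z y) z := by
  by_cases hy : 0 < y
  · simp only [kerF, kerD, if_pos hy]
    have h1 := hasDerivAt_phiK1 t (y / Real.sqrt Dp) (Real.sqrt Dp) z
    have h2 := hasDerivAt_phiK2 t (y / Real.sqrt Dp) (Real.sqrt Dp) z
    have h3 := (h1.add (h2.const_mul (2 * α - 1))).const_mul (Real.sqrt Dp)⁻¹
    refine h3.congr_deriv ?_
    ring
  · simp only [kerF, kerD, if_neg hy]
    have h1 := hasDerivAt_phiK1 t (y / Real.sqrt Dm) (Real.sqrt Dp) z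
    exact (h1.const_mul (2 * (1 - α))).const_mul (Real.sqrt Dm)⁻¹

lemma continuous_kerF_branch1 (Dp Dm α t z : ℝ) :
    Continuous (fun y : ℝ => (Real.sqrt Dp)⁻¹ *
      (phiK t (y / Real.sqrt Dp - z / Real.sqrt Dp) +
      (2 * α - 1) * phiK t (z / Real.sqrt Dp + y / Real.sqrt Dp))) :=
  continuous_const.mul (((continuous_phiK t).comp (by fun_prop)).add
    (continuous_const.mul ((continuous_phiK t).comp (by fun_prop))))

lemma meas_kerF (Dp Dm α t z : ℝ) : Measurable (fun y => kerF Dp Dm α t z y) := by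
  unfold kerF
  exact Measurable.ite (measurableSet_lt measurable_const measurable_id)
    (continuous_kerF_branch1 Dp Dm α t z).measurable
    (continuous_const.mul (continuous_const.mul
      ((continuous_phiK t).comp (by fun_prop)))).measurable

lemma meas_kerD (Dp Dm α t z : ℝ) : Measurable (fun y => kerD Dp Dm α t z y) := by
  unfold kerD
  apply Measurable.ite (measurableSet_lt measurable_const measurable_id)
  · exact (continuous_const.mul ((continuous_const.mul ((continuous_dphi t).comp
      (by fun_prop))).sub (continuous_const.mul (continuous_const.mul
      ((continuous_dphi t).comp (by fun_prop)))))).measurable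
  · exact (continuous_const.mul (continuous_const.mul (continuous_const.mul
      ((continuous_dphi t).comp (by fun_prop))))).measurable

lemma phiK_sub_bound (t w s S : ℝ) (ht : 0 < t) (hs : s ^ 2 ≤ S ^ 2) :
    phiK t (w - s) ≤ (Real.sqrt (2 * Real.pi * t))⁻¹ * Real.exp (S ^ 2 / (4 * t)) *
      Real.exp (-(w ^ 2) / (8 * t)) := by
  rw [sub_eq_add_neg]
  have h := phiK_shift t w (-s) S ht (by rwa [neg_sq])
  calc phiK t (w + -s) ≤ _ := h
    _ = _ := by ring

lemma phiK_addl_bound (t w s S : ℝ) (ht : 0 < t) (hs : s ^ 2 ≤ S ^ 2) :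
    phiK t (s + w) ≤ (Real.sqrt (2 * Real.pi * t))⁻¹ * Real.exp (S ^ 2 / (4 * t)) *
      Real.exp (-(w ^ 2) / (8 * t)) := by
  rw [add_comm]
  have h := phiK_shift t w s S ht hs
  calc phiK t (w + s) ≤ _ := h
    _ = _ := by ring

lemma dphi_sub_bound (t w s S : ℝ) (ht : 0 < t) (hs : s ^ 2 ≤ S ^ 2) :
    |dphi t (w - s)| ≤ Real.sqrt (2 * t) / t * (Real.sqrt (2 * Real.pi * t))⁻¹ *
      Real.exp (S ^ 2 / (4 * t)) * Real.exp (-(w ^ 2) / (8 * t)) := by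
  rw [sub_eq_add_neg]
  exact dphi_shift t w (-s) S ht (by rwa [neg_sq])

lemma dphi_addl_bound (t w s S : ℝ) (ht : 0 < t) (hs : s ^ 2 ≤ S ^ 2) :
    |dphi t (s + w)| ≤ Real.sqrt (2 * t) / t * (Real.sqrt (2 * Real.pi * t))⁻¹ *
      Real.exp (S ^ 2 / (4 * t)) * Real.exp (-(w ^ 2) / (8 * t)) := by
  rw [add_comm]
  exact dphi_shift t w s S ht hs

lemma kerF_abs_le (Dp Dm α t z y S : ℝ) (hDp : 0 < Dp) (hDm : 0 < Dm) (ht : 0 < t)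
    (hα0 : 0 ≤ α) (hα1 : α ≤ 1) (hzS : (z / Real.sqrt Dp) ^ 2 ≤ S ^ 2) :
    |kerF Dp Dm α t z y| ≤
      ((Real.sqrt Dp)⁻¹ + (Real.sqrt Dm)⁻¹) * 2 *
        ((Real.sqrt (2 * Real.pi * t))⁻¹ * Real.exp (S ^ 2 / (4 * t))) *
        (Real.exp (-((y / Real.sqrt Dp) ^ 2) / (8 * t)) +
          Real.exp (-((y / Real.sqrt Dm) ^ 2) / (8 * t))) := by
  have ha : 0 < Real.sqrt Dp := Real.sqrt_pos.2 hDp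
  have hb : 0 < Real.sqrt Dm := Real.sqrt_pos.2 hDm
  have hia : (0:ℝ) ≤ (Real.sqrt Dp)⁻¹ := inv_nonneg.2 ha.le
  have hib : (0:ℝ) ≤ (Real.sqrt Dm)⁻¹ := inv_nonneg.2 hb.le
  have hK : (0:ℝ) ≤ (Real.sqrt (2 * Real.pi * t))⁻¹ * Real.exp (S ^ 2 / (4 * t)) :=
    mul_nonneg (inv_nonneg.2 (Real.sqrt_nonneg _)) (Real.exp_pos _).le
  have hE1 : (0:ℝ) ≤ Real.exp (-((y / Real.sqrt Dp) ^ 2) / (8 * t)) := (Real.exp_pos _).le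
  have hE2 : (0:ℝ) ≤ Real.exp (-((y / Real.sqrt Dm) ^ 2) / (8 * t)) := (Real.exp_pos _).le
  have hβ : |2 * α - 1| ≤ 1 := abs_le.2 ⟨by linarith, by linarith⟩
  by_cases hy : 0 < y
  · rw [kerF, if_pos hy]
    have hA := phiK_sub_bound t (y / Real.sqrt Dp) (z / Real.sqrt Dp) S ht hzS
    have hB := phiK_addl_bound t (y / Real.sqrt Dp) (z / Real.sqrt Dp) S ht hzS
    have hA0 := phiK_nonneg t (y / Real.sqrt Dp - z / Real.sqrt Dp)
    have hB0 := phiK_nonneg t (z / Real.sqrt Dp + y / Real.sqrt Dp)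
    have habs : |phiK t (y / Real.sqrt Dp - z / Real.sqrt Dp) +
        (2 * α - 1) * phiK t (z / Real.sqrt Dp + y / Real.sqrt Dp)| ≤
        phiK t (y / Real.sqrt Dp - z / Real.sqrt Dp) +
          phiK t (z / Real.sqrt Dp + y / Real.sqrt Dp) := by
      calc |phiK t (y / Real.sqrt Dp - z / Real.sqrt Dp) +
            (2 * α - 1) * phiK t (z / Real.sqrt Dp + y / Real.sqrt Dp)|
          ≤ |phiK t (y / Real.sqrt Dp - z / Real.sqrt Dp)| +
            |(2 * α - 1) * phiK t (z / Real.sqrt Dp + y / Real.sqrt Dp)| := abs_add_le _ _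
        _ ≤ _ := by
            rw [abs_of_nonneg hA0, abs_mul, abs_of_nonneg hB0]
            nlinarith [mul_le_mul_of_nonneg_right hβ hB0]
    rw [abs_mul, abs_of_nonneg hia]
    calc (Real.sqrt Dp)⁻¹ * |phiK t (y / Real.sqrt Dp - z / Real.sqrt Dp) +
          (2 * α - 1) * phiK t (z / Real.sqrt Dp + y / Real.sqrt Dp)|
        ≤ (Real.sqrt Dp)⁻¹ * (phiK t (y / Real.sqrt Dp - z / Real.sqrt Dp) +
          phiK t (z / Real.sqrt Dp + y / Real.sqrt Dp)) :=
          mul_le_mul_of_nonneg_left habs hia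
      _ ≤ _ := by nlinarith [mul_le_mul_of_nonneg_left hA hia,
          mul_le_mul_of_nonneg_left hB hia, mul_nonneg (mul_nonneg hia hK) hE2,
          mul_nonneg (mul_nonneg hib hK) hE1, mul_nonneg (mul_nonneg hib hK) hE2]
  · rw [kerF, if_neg hy]
    have hC := phiK_sub_bound t (y / Real.sqrt Dm) (z / Real.sqrt Dp) S ht hzS
    have hC0 := phiK_nonneg t (y / Real.sqrt Dm - z / Real.sqrt Dp)
    have h1α : (0:ℝ) ≤ 2 * (1 - α) := by linarith
    have h1α2 : 2 * (1 - α) ≤ 2 := by linarith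
    rw [abs_mul, abs_of_nonneg hib, abs_mul, abs_of_nonneg h1α, abs_of_nonneg hC0]
    nlinarith [mul_le_mul_of_nonneg_left hC hib, mul_nonneg (mul_nonneg hia hK) hE1,
      mul_nonneg (mul_nonneg hia hK) hE2, mul_nonneg (mul_nonneg hib hK) hE1,
      mul_nonneg hib hC0, mul_le_mul_of_nonneg_left hC (mul_nonneg hib h1α),
      mul_nonneg (mul_nonneg hib hK) hE2]

lemma kerD_abs_le (Dp Dm α t z y S : ℝ) (hDp : 0 < Dp) (hDm : 0 < Dm) (ht : 0 < t)
    (hα0 : 0 ≤ α) (hα1 : α ≤ 1) (hzS : (z / Real.sqrt Dp) ^ 2 ≤ S ^ 2) :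
    |kerD Dp Dm α t z y| ≤
      ((Real.sqrt Dp)⁻¹ * (Real.sqrt Dp)⁻¹ + (Real.sqrt Dp)⁻¹ * (Real.sqrt Dm)⁻¹) * 2 *
        (Real.sqrt (2 * t) / t * (Real.sqrt (2 * Real.pi * t))⁻¹ *
          Real.exp (S ^ 2 / (4 * t))) *
        (Real.exp (-((y / Real.sqrt Dp) ^ 2) / (8 * t)) +
          Real.exp (-((y / Real.sqrt Dm) ^ 2) / (8 * t))) := by
  have ha : 0 < Real.sqrt Dp := Real.sqrt_pos.2 hDp
  have hb : 0 < Real.sqrt Dm := Real.sqrt_pos.2 hDm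
  have hia : (0:ℝ) ≤ (Real.sqrt Dp)⁻¹ := inv_nonneg.2 ha.le
  have hib : (0:ℝ) ≤ (Real.sqrt Dm)⁻¹ := inv_nonneg.2 hb.le
  have hK : (0:ℝ) ≤ Real.sqrt (2 * t) / t * (Real.sqrt (2 * Real.pi * t))⁻¹ *
      Real.exp (S ^ 2 / (4 * t)) :=
    mul_nonneg (mul_nonneg (div_nonneg (Real.sqrt_nonneg _) ht.le)
      (inv_nonneg.2 (Real.sqrt_nonneg _))) (Real.exp_pos _).le
  have hE1 : (0:ℝ) ≤ Real.exp (-((y / Real.sqrt Dp) ^ 2) / (8 * t)) := (Real.exp_pos _).le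
  have hE2 : (0:ℝ) ≤ Real.exp (-((y / Real.sqrt Dm) ^ 2) / (8 * t)) := (Real.exp_pos _).le
  have hβ : |2 * α - 1| ≤ 1 := abs_le.2 ⟨by linarith, by linarith⟩
  by_cases hy : 0 < y
  · rw [kerD, if_pos hy]
    have hA := dphi_sub_bound t (y / Real.sqrt Dp) (z / Real.sqrt Dp) S ht hzS
    have hB := dphi_addl_bound t (y / Real.sqrt Dp) (z / Real.sqrt Dp) S ht hzS
    have hA0 : (0:ℝ) ≤ |dphi t (y / Real.sqrt Dp - z / Real.sqrt Dp)| := abs_nonneg _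
    have hB0 : (0:ℝ) ≤ |dphi t (z / Real.sqrt Dp + y / Real.sqrt Dp)| := abs_nonneg _
    have habs : |(Real.sqrt Dp)⁻¹ * dphi t (y / Real.sqrt Dp - z / Real.sqrt Dp) -
        (2 * α - 1) * ((Real.sqrt Dp)⁻¹ * dphi t (z / Real.sqrt Dp + y / Real.sqrt Dp))| ≤
        (Real.sqrt Dp)⁻¹ * (|dphi t (y / Real.sqrt Dp - z / Real.sqrt Dp)| +
          |dphi t (z / Real.sqrt Dp + y / Real.sqrt Dp)|) := by
      calc |(Real.sqrt Dp)⁻¹ * dphi t (y / Real.sqrt Dp - z / Real.sqrt Dp) -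
            (2 * α - 1) * ((Real.sqrt Dp)⁻¹ * dphi t (z / Real.sqrt Dp + y / Real.sqrt Dp))|
          ≤ |(Real.sqrt Dp)⁻¹ * dphi t (y / Real.sqrt Dp - z / Real.sqrt Dp)| +
            |(2 * α - 1) * ((Real.sqrt Dp)⁻¹ *
              dphi t (z / Real.sqrt Dp + y / Real.sqrt Dp))| := abs_sub _ _
        _ ≤ _ := by
            rw [abs_mul, abs_mul, abs_mul, abs_of_nonneg hia]
            nlinarith [mul_le_mul_of_nonneg_right hβ (mul_nonneg hia hB0)]
    rw [abs_mul, abs_of_nonneg hia]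
    calc (Real.sqrt Dp)⁻¹ * |(Real.sqrt Dp)⁻¹ * dphi t (y / Real.sqrt Dp - z / Real.sqrt Dp) -
          (2 * α - 1) * ((Real.sqrt Dp)⁻¹ * dphi t (z / Real.sqrt Dp + y / Real.sqrt Dp))|
        ≤ (Real.sqrt Dp)⁻¹ * ((Real.sqrt Dp)⁻¹ *
          (|dphi t (y / Real.sqrt Dp - z / Real.sqrt Dp)| +
            |dphi t (z / Real.sqrt Dp + y / Real.sqrt Dp)|)) :=
          mul_le_mul_of_nonneg_left habs hia
      _ ≤ _ := by nlinarith [mul_le_mul_of_nonneg_left hA (mul_nonneg hia hia),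
          mul_le_mul_of_nonneg_left hB (mul_nonneg hia hia),
          mul_nonneg (mul_nonneg (mul_nonneg hia hia) hK) hE2,
          mul_nonneg (mul_nonneg (mul_nonneg hia hib) hK) hE1,
          mul_nonneg (mul_nonneg (mul_nonneg hia hib) hK) hE2]
  · rw [kerD, if_neg hy]
    have hC := dphi_sub_bound t (y / Real.sqrt Dm) (z / Real.sqrt Dp) S ht hzS
    have hC0 : (0:ℝ) ≤ |dphi t (y / Real.sqrt Dm - z / Real.sqrt Dp)| := abs_nonneg _
    have h1α : (0:ℝ) ≤ 2 * (1 - α) := by linarith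
    have h1α2 : 2 * (1 - α) ≤ 2 := by linarith
    rw [abs_mul, abs_of_nonneg hib, abs_mul, abs_of_nonneg h1α, abs_mul, abs_of_nonneg hia]
    nlinarith [mul_le_mul_of_nonneg_left hC (mul_nonneg hib (mul_nonneg h1α hia)),
      mul_le_mul_of_nonneg_left hC (mul_nonneg hib hia),
      mul_nonneg (mul_nonneg (mul_nonneg hia hia) hK) hE1,
      mul_nonneg (mul_nonneg (mul_nonneg hia hia) hK) hE2,
      mul_nonneg (mul_nonneg (mul_nonneg hia hib) hK) hE1,
      mul_nonneg (mul_nonneg (mul_nonneg hia hib) hK) hE2]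

lemma kerD_abs_le_H (Dp Dm α t x y : ℝ) (hDp : 0 < Dp) (hDm : 0 < Dm)
    (hα0 : 0 ≤ α) (hα1 : α ≤ 1) :
    |kerD Dp Dm α t x y| ≤
      (Real.sqrt Dp)⁻¹ * (Real.sqrt Dp)⁻¹ *
        (|dphi t (y / Real.sqrt Dp - x / Real.sqrt Dp)| +
          |dphi t (x / Real.sqrt Dp + y / Real.sqrt Dp)|) +
      (Real.sqrt Dm)⁻¹ * (2 * (Real.sqrt Dp)⁻¹) *
        |dphi t (y / Real.sqrt Dm - x / Real.sqrt Dp)| := by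
  have ha : 0 < Real.sqrt Dp := Real.sqrt_pos.2 hDp
  have hb : 0 < Real.sqrt Dm := Real.sqrt_pos.2 hDm
  have hia : (0:ℝ) ≤ (Real.sqrt Dp)⁻¹ := inv_nonneg.2 ha.le
  have hib : (0:ℝ) ≤ (Real.sqrt Dm)⁻¹ := inv_nonneg.2 hb.le
  have hβ : |2 * α - 1| ≤ 1 := abs_le.2 ⟨by linarith, by linarith⟩
  by_cases hy : 0 < y
  · rw [kerD, if_pos hy]
    have hA0 : (0:ℝ) ≤ |dphi t (y / Real.sqrt Dp - x / Real.sqrt Dp)| := abs_nonneg _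
    have hB0 : (0:ℝ) ≤ |dphi t (x / Real.sqrt Dp + y / Real.sqrt Dp)| := abs_nonneg _
    have hC0 : (0:ℝ) ≤ |dphi t (y / Real.sqrt Dm - x / Real.sqrt Dp)| := abs_nonneg _
    have h1 : |(Real.sqrt Dp)⁻¹ * ((Real.sqrt Dp)⁻¹ *
        dphi t (y / Real.sqrt Dp - x / Real.sqrt Dp) -
        (2 * α - 1) * ((Real.sqrt Dp)⁻¹ * dphi t (x / Real.sqrt Dp + y / Real.sqrt Dp)))| ≤
        (Real.sqrt Dp)⁻¹ * ((Real.sqrt Dp)⁻¹ * |dphi t (y / Real.sqrt Dp - x / Real.sqrt Dp)| +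
          (Real.sqrt Dp)⁻¹ * |dphi t (x / Real.sqrt Dp + y / Real.sqrt Dp)|) := by
      rw [abs_mul, abs_of_nonneg hia]
      apply mul_le_mul_of_nonneg_left _ hia
      calc |(Real.sqrt Dp)⁻¹ * dphi t (y / Real.sqrt Dp - x / Real.sqrt Dp) -
            (2 * α - 1) * ((Real.sqrt Dp)⁻¹ * dphi t (x / Real.sqrt Dp + y / Real.sqrt Dp))|
          ≤ |(Real.sqrt Dp)⁻¹ * dphi t (y / Real.sqrt Dp - x / Real.sqrt Dp)| +
            |(2 * α - 1) * ((Real.sqrt Dp)⁻¹ *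
              dphi t (x / Real.sqrt Dp + y / Real.sqrt Dp))| := abs_sub _ _
        _ ≤ _ := by
            rw [abs_mul, abs_mul, abs_mul, abs_of_nonneg hia]
            nlinarith [mul_le_mul_of_nonneg_right hβ (mul_nonneg hia hB0)]
    calc _ ≤ _ := h1
      _ ≤ _ := by nlinarith [mul_nonneg (mul_nonneg hib (mul_nonneg (by norm_num : (0:ℝ) ≤ 2) hia)) hC0]
  · rw [kerD, if_neg hy]
    have hA0 : (0:ℝ) ≤ |dphi t (y / Real.sqrt Dp - x / Real.sqrt Dp)| := abs_nonneg _
    have hB0 : (0:ℝ) ≤ |dphi t (x / Real.sqrt Dp + y / Real.sqrt Dp)| := abs_nonneg _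
    have hC0 : (0:ℝ) ≤ |dphi t (y / Real.sqrt Dm - x / Real.sqrt Dp)| := abs_nonneg _
    have h1α : (0:ℝ) ≤ 2 * (1 - α) := by linarith
    have h1α2 : 2 * (1 - α) ≤ 2 := by linarith
    rw [abs_mul, abs_of_nonneg hib, abs_mul, abs_of_nonneg h1α, abs_mul, abs_of_nonneg hia]
    nlinarith [mul_le_mul_of_nonneg_right h1α2 (mul_nonneg hib (mul_nonneg hia hC0)),
      mul_nonneg (mul_nonneg hia hia) hA0, mul_nonneg (mul_nonneg hia hia) hB0,
      mul_nonneg hib (mul_nonneg hia hC0)]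

lemma integrable_dphi_sub (t a c : ℝ) (ht : 0 < t) (ha : 0 < a) :
    Integrable (fun y : ℝ => dphi t (y / a - c)) := by
  have h : (fun y : ℝ => dphi t (y / a - c)) = fun y : ℝ => dphi t (y / a + -c) := by
    funext y; rw [sub_eq_add_neg]
  rw [h]; exact integrable_dphi_comp t a (-c) ht ha

lemma integrable_dphi_addl (t a c : ℝ) (ht : 0 < t) (ha : 0 < a) :
    Integrable (fun y : ℝ => dphi t (c + y / a)) := by
  have h : (fun y : ℝ => dphi t (c + y / a)) = fun y : ℝ => dphi t (y / a + c) := by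
    funext y; rw [add_comm]
  rw [h]; exact integrable_dphi_comp t a c ht ha

lemma integral_Ioi_dphi_sub (t a c : ℝ) (ht : 0 < t) (ha : 0 < a) :
    ∫ y in Ioi (0:ℝ), dphi t (y / a - c) = a * phiK t c := by
  have h : ∀ y : ℝ, y / a - c = y / a + -c := fun y => sub_eq_add_neg _ _
  simp_rw [h]
  rw [integral_dphi_Ioi_shift t a (-c) ht ha]
  rw [phiK_even t c]

lemma integral_Ioi_dphi_addl (t a c : ℝ) (ht : 0 < t) (ha : 0 < a) :
    ∫ y in Ioi (0:ℝ), dphi t (c + y / a) = a * phiK t c := by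
  have h : ∀ y : ℝ, c + y / a = y / a + c := fun y => add_comm _ _
  simp_rw [h]
  exact integral_dphi_Ioi_shift t a c ht ha

lemma integral_Iic_dphi_sub (t a c : ℝ) (ht : 0 < t) (ha : 0 < a) :
    ∫ y in Iic (0:ℝ), dphi t (y / a - c) = -(a * phiK t c) := by
  have h : ∀ y : ℝ, y / a - c = y / a + -c := fun y => sub_eq_add_neg _ _
  simp_rw [h]
  rw [integral_dphi_Iic_shift t a (-c) ht ha, phiK_even t c]

lemma integral_abs_dphi_sub (t a c : ℝ) (ht : 0 < t) (ha : 0 < a) :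
    ∫ y : ℝ, |dphi t (y / a - c)| = a * (2 * phiK t 0) := by
  have h : ∀ y : ℝ, y / a - c = y / a + -c := fun y => sub_eq_add_neg _ _
  simp_rw [h]
  exact integral_abs_dphi_shift t a (-c) ht ha

lemma integral_abs_dphi_addl (t a c : ℝ) (ht : 0 < t) (ha : 0 < a) :
    ∫ y : ℝ, |dphi t (c + y / a)| = a * (2 * phiK t 0) := by
  have h : ∀ y : ℝ, c + y / a = y / a + c := fun y => add_comm _ _
  simp_rw [h]
  exact integral_abs_dphi_shift t a c ht ha

lemma lemA (Dp Dm α t x : ℝ) (hDp : 0 < Dp) (hDm : 0 < Dm) (ht : 0 < t)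
    (hα0 : 0 ≤ α) (hα1 : α ≤ 1) (hx : 0 < x) (u₀ : ℝ → ℝ) (hc : Continuous u₀)
    (I1 : ℝ) (hbd : ∀ y, |u₀ y - u₀ 0| ≤ I1) :
    ∃ d : ℝ, HasDerivAt (fun z => ∫ y : ℝ, u₀ y * qSkew Dp Dm α t z y) d x ∧
      |d| ≤ 8 / Real.sqrt Dp / Real.sqrt t * I1 := by
  have ha : 0 < Real.sqrt Dp := Real.sqrt_pos.2 hDp
  have hb : 0 < Real.sqrt Dm := Real.sqrt_pos.2 hDm
  have hI1 : 0 ≤ I1 := by have := hbd 0; simpa using this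
  have hM : ∀ y, |u₀ y| ≤ |u₀ 0| + I1 := by
    intro y
    have h1 := hbd y
    have h2 := abs_sub_abs_le_abs_sub (u₀ y) (u₀ 0)
    linarith
  have hM0 : 0 ≤ |u₀ 0| + I1 := by positivity
  have hball : ∀ z ∈ Metric.ball x (x / 2), (z / Real.sqrt Dp) ^ 2 ≤ (3 * x / 2 / Real.sqrt Dp) ^ 2 ∧ 0 < z := by
    intro z hz
    rw [Metric.mem_ball, Real.dist_eq, abs_lt] at hz
    have h1 : x / 2 < z := by linarith [hz.1]
    have h2 : z < 3 * x / 2 := by linarith [hz.2]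
    refine ⟨?_, by linarith⟩
    have h3 : 0 ≤ z / Real.sqrt Dp := div_nonneg (by linarith) ha.le
    have h4 : z / Real.sqrt Dp ≤ 3 * x / 2 / Real.sqrt Dp :=
      (div_le_div_iff_of_pos_right ha).2 h2.le
    nlinarith
  have hG_int : Integrable (fun y : ℝ => Real.exp (-((y / Real.sqrt Dp) ^ 2) / (8 * t)) +
      Real.exp (-((y / Real.sqrt Dm) ^ 2) / (8 * t))) :=
    (integrable_gauss_div t (Real.sqrt Dp) ht ha).add (integrable_gauss_div t (Real.sqrt Dm) ht hb)
  have hFmeas : ∀ z : ℝ, AEStronglyMeasurable (fun y => u₀ y * kerF Dp Dm α t z y) volume :=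
    fun z => hc.aestronglyMeasurable.mul (meas_kerF Dp Dm α t z).aestronglyMeasurable
  have hDmeas : ∀ z : ℝ, AEStronglyMeasurable (fun y => u₀ y * kerD Dp Dm α t z y) volume :=
    fun z => hc.aestronglyMeasurable.mul (meas_kerD Dp Dm α t z).aestronglyMeasurable
  have hxball : x ∈ Metric.ball x (x / 2) := Metric.mem_ball_self (by linarith)
  have hxS : (x / Real.sqrt Dp) ^ 2 ≤ (3 * x / 2 / Real.sqrt Dp) ^ 2 := (hball x hxball).1
  -- integrability of F x₀
  have hFint : Integrable (fun y => u₀ y * kerF Dp Dm α t x y) := by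
    apply Integrable.mono ((hG_int.const_mul (((Real.sqrt Dp)⁻¹ + (Real.sqrt Dm)⁻¹) * 2 *
      ((Real.sqrt (2 * Real.pi * t))⁻¹ *
        Real.exp ((3 * x / 2 / Real.sqrt Dp) ^ 2 / (4 * t))))).const_mul (|u₀ 0| + I1)) (hFmeas x)
    apply ae_of_all
    intro y
    rw [Real.norm_eq_abs, Real.norm_eq_abs, abs_mul]
    have h1 := kerF_abs_le Dp Dm α t x y (3 * x / 2 / Real.sqrt Dp) hDp hDm ht hα0 hα1 hxS
    have h2 := hM y
    have h3 : (0:ℝ) ≤ ((Real.sqrt Dp)⁻¹ + (Real.sqrt Dm)⁻¹) * 2 *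
        ((Real.sqrt (2 * Real.pi * t))⁻¹ * Real.exp ((3 * x / 2 / Real.sqrt Dp) ^ 2 / (4 * t))) *
        (Real.exp (-((y / Real.sqrt Dp) ^ 2) / (8 * t)) +
          Real.exp (-((y / Real.sqrt Dm) ^ 2) / (8 * t))) := by positivity
    calc |u₀ y| * |kerF Dp Dm α t x y| ≤ (|u₀ 0| + I1) * (((Real.sqrt Dp)⁻¹ + (Real.sqrt Dm)⁻¹) * 2 *
          ((Real.sqrt (2 * Real.pi * t))⁻¹ * Real.exp ((3 * x / 2 / Real.sqrt Dp) ^ 2 / (4 * t))) *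
          (Real.exp (-((y / Real.sqrt Dp) ^ 2) / (8 * t)) +
            Real.exp (-((y / Real.sqrt Dm) ^ 2) / (8 * t)))) :=
        mul_le_mul h2 h1 (abs_nonneg _) hM0
      _ ≤ |(|u₀ 0| + I1) * (((Real.sqrt Dp)⁻¹ + (Real.sqrt Dm)⁻¹) * 2 *
          ((Real.sqrt (2 * Real.pi * t))⁻¹ * Real.exp ((3 * x / 2 / Real.sqrt Dp) ^ 2 / (4 * t))) *
          (Real.exp (-((y / Real.sqrt Dp) ^ 2) / (8 * t)) +
            Real.exp (-((y / Real.sqrt Dm) ^ 2) / (8 * t))))| := le_abs_self _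
  -- the dominated-convergence differentiation
  have hbnd : ∀ y : ℝ, ∀ z ∈ Metric.ball x (x / 2),
      ‖u₀ y * kerD Dp Dm α t z y‖ ≤ (|u₀ 0| + I1) * (((Real.sqrt Dp)⁻¹ * (Real.sqrt Dp)⁻¹ +
        (Real.sqrt Dp)⁻¹ * (Real.sqrt Dm)⁻¹) * 2 *
        (Real.sqrt (2 * t) / t * (Real.sqrt (2 * Real.pi * t))⁻¹ *
          Real.exp ((3 * x / 2 / Real.sqrt Dp) ^ 2 / (4 * t))) *
        (Real.exp (-((y / Real.sqrt Dp) ^ 2) / (8 * t)) +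
          Real.exp (-((y / Real.sqrt Dm) ^ 2) / (8 * t)))) := by
    intro y z hz
    rw [Real.norm_eq_abs, abs_mul]
    have h1 := kerD_abs_le Dp Dm α t z y (3 * x / 2 / Real.sqrt Dp) hDp hDm ht hα0 hα1 (hball z hz).1
    exact mul_le_mul (hM y) h1 (abs_nonneg _) hM0
  have hdif : ∀ y : ℝ, ∀ z ∈ Metric.ball x (x / 2),
      HasDerivAt (fun z => u₀ y * kerF Dp Dm α t z y) (u₀ y * kerD Dp Dm α t z y) z := by
    intro y z _
    exact (hasDerivAt_kerF Dp Dm α t y z hDp).const_mul (u₀ y)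
  obtain ⟨-, hder⟩ := hasDerivAt_integral_of_dominated_loc_of_deriv_le
    (F := fun z y => u₀ y * kerF Dp Dm α t z y)
    (F' := fun z y => u₀ y * kerD Dp Dm α t z y)
    (x₀ := x)
    (bound := fun y => (|u₀ 0| + I1) * (((Real.sqrt Dp)⁻¹ * (Real.sqrt Dp)⁻¹ +
      (Real.sqrt Dp)⁻¹ * (Real.sqrt Dm)⁻¹) * 2 *
      (Real.sqrt (2 * t) / t * (Real.sqrt (2 * Real.pi * t))⁻¹ *
        Real.exp ((3 * x / 2 / Real.sqrt Dp) ^ 2 / (4 * t))) *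
      (Real.exp (-((y / Real.sqrt Dp) ^ 2) / (8 * t)) +
        Real.exp (-((y / Real.sqrt Dm) ^ 2) / (8 * t)))))
    (Metric.ball_mem_nhds x (by linarith : (0:ℝ) < x / 2))
    (Filter.Eventually.of_forall hFmeas)
    hFint
    (hDmeas x)
    (ae_of_all _ hbnd)
    ((hG_int.const_mul _).const_mul _)
    (ae_of_all _ hdif)
  refine ⟨∫ y : ℝ, u₀ y * kerD Dp Dm α t x y, ?_, ?_⟩
  · apply HasDerivAt.congr_of_eventuallyEq hder
    filter_upwards [Ioi_mem_nhds hx] with z hz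
    exact integral_congr_ae (Filter.Eventually.of_forall fun y => by
      show u₀ y * qSkew Dp Dm α t z y = u₀ y * kerF Dp Dm α t z y
      rw [q_eq Dp Dm α t z y hDp hDm hz])
  -- now the bound
  · have hIdk : Integrable (fun y => kerD Dp Dm α t x y) := by
      apply Integrable.mono (hG_int.const_mul (((Real.sqrt Dp)⁻¹ * (Real.sqrt Dp)⁻¹ +
        (Real.sqrt Dp)⁻¹ * (Real.sqrt Dm)⁻¹) * 2 *
        (Real.sqrt (2 * t) / t * (Real.sqrt (2 * Real.pi * t))⁻¹ *
          Real.exp ((3 * x / 2 / Real.sqrt Dp) ^ 2 / (4 * t)))))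
        (meas_kerD Dp Dm α t x).aestronglyMeasurable
      apply ae_of_all
      intro y
      rw [Real.norm_eq_abs, Real.norm_eq_abs]
      have h1 := kerD_abs_le Dp Dm α t x y (3 * x / 2 / Real.sqrt Dp) hDp hDm ht hα0 hα1 hxS
      exact h1.trans (le_abs_self _)
    have hIsub : Integrable (fun y => (u₀ y - u₀ 0) * kerD Dp Dm α t x y) := by
      apply Integrable.mono (hIdk.abs.const_mul I1)
        (((hc.sub continuous_const).aestronglyMeasurable).mul
          (meas_kerD Dp Dm α t x).aestronglyMeasurable)
      apply ae_of_all
      intro y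
      calc ‖(u₀ y - u₀ 0) * kerD Dp Dm α t x y‖
          = |u₀ y - u₀ 0| * |kerD Dp Dm α t x y| := by
            rw [Real.norm_eq_abs, abs_mul]
        _ ≤ I1 * |kerD Dp Dm α t x y| :=
          mul_le_mul_of_nonneg_right (hbd y) (abs_nonneg _)
        _ ≤ ‖I1 * |kerD Dp Dm α t x y|‖ := by
            rw [Real.norm_eq_abs]; exact le_abs_self _
    -- the integral of kerD vanishes
    have hzero : ∫ y : ℝ, kerD Dp Dm α t x y = 0 := by
      rw [← integral_add_compl (measurableSet_Ioi (a := (0:ℝ))) hIdk, compl_Ioi]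
      have hIoi : ∫ y in Ioi (0:ℝ), kerD Dp Dm α t x y =
          (Real.sqrt Dp)⁻¹ * ((Real.sqrt Dp)⁻¹ * (Real.sqrt Dp * phiK t (x / Real.sqrt Dp)) -
            (2 * α - 1) * ((Real.sqrt Dp)⁻¹ * (Real.sqrt Dp * phiK t (x / Real.sqrt Dp)))) := by
        rw [setIntegral_congr_fun measurableSet_Ioi
          (fun y (hy : y ∈ Ioi (0:ℝ)) => by rw [kerD, if_pos (mem_Ioi.1 hy)])]
        rw [integral_const_mul]
        rw [integral_sub
          (((integrable_dphi_sub t (Real.sqrt Dp) (x / Real.sqrt Dp) ht ha).const_mul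
            (Real.sqrt Dp)⁻¹).integrableOn)
          ((((integrable_dphi_addl t (Real.sqrt Dp) (x / Real.sqrt Dp) ht ha).const_mul
            (Real.sqrt Dp)⁻¹).const_mul (2 * α - 1)).integrableOn)]
        rw [integral_const_mul, integral_const_mul, integral_const_mul]
        rw [integral_Ioi_dphi_sub t (Real.sqrt Dp) (x / Real.sqrt Dp) ht ha,
          integral_Ioi_dphi_addl t (Real.sqrt Dp) (x / Real.sqrt Dp) ht ha]
      have hIic : ∫ y in Iic (0:ℝ), kerD Dp Dm α t x y =
          (Real.sqrt Dm)⁻¹ * (2 * (1 - α) *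
            ((Real.sqrt Dp)⁻¹ * (-(Real.sqrt Dm * phiK t (x / Real.sqrt Dp))))) := by
        rw [setIntegral_congr_fun measurableSet_Iic
          (fun y (hy : y ∈ Iic (0:ℝ)) => by rw [kerD, if_neg (not_lt.2 (mem_Iic.1 hy))])]
        rw [integral_const_mul, integral_const_mul, integral_const_mul]
        rw [integral_Iic_dphi_sub t (Real.sqrt Dm) (x / Real.sqrt Dp) ht hb]
      rw [hIoi, hIic]
      field_simp
      ring
    -- the H-bound on the integral of |kerD|
    have hH_int : Integrable (fun y : ℝ => (Real.sqrt Dp)⁻¹ * (Real.sqrt Dp)⁻¹ *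
        (|dphi t (y / Real.sqrt Dp - x / Real.sqrt Dp)| +
          |dphi t (x / Real.sqrt Dp + y / Real.sqrt Dp)|) +
        (Real.sqrt Dm)⁻¹ * (2 * (Real.sqrt Dp)⁻¹) *
          |dphi t (y / Real.sqrt Dm - x / Real.sqrt Dp)|) :=
      (((integrable_dphi_sub t (Real.sqrt Dp) (x / Real.sqrt Dp) ht ha).abs.add
        (integrable_dphi_addl t (Real.sqrt Dp) (x / Real.sqrt Dp) ht ha).abs).const_mul
          ((Real.sqrt Dp)⁻¹ * (Real.sqrt Dp)⁻¹)).add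
        (((integrable_dphi_sub t (Real.sqrt Dm) (x / Real.sqrt Dp) ht hb).abs).const_mul
          ((Real.sqrt Dm)⁻¹ * (2 * (Real.sqrt Dp)⁻¹)))
    have habsint : ∫ y : ℝ, |kerD Dp Dm α t x y| ≤ 8 * (Real.sqrt Dp)⁻¹ * phiK t 0 := by
      have h1 : ∫ y : ℝ, |kerD Dp Dm α t x y| ≤ ∫ y : ℝ, ((Real.sqrt Dp)⁻¹ * (Real.sqrt Dp)⁻¹ *
          (|dphi t (y / Real.sqrt Dp - x / Real.sqrt Dp)| +
            |dphi t (x / Real.sqrt Dp + y / Real.sqrt Dp)|) +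
          (Real.sqrt Dm)⁻¹ * (2 * (Real.sqrt Dp)⁻¹) *
            |dphi t (y / Real.sqrt Dm - x / Real.sqrt Dp)|) :=
        integral_mono hIdk.abs hH_int
          (fun y => kerD_abs_le_H Dp Dm α t x y hDp hDm hα0 hα1)
      have h2 : ∫ y : ℝ, ((Real.sqrt Dp)⁻¹ * (Real.sqrt Dp)⁻¹ *
          (|dphi t (y / Real.sqrt Dp - x / Real.sqrt Dp)| +
            |dphi t (x / Real.sqrt Dp + y / Real.sqrt Dp)|) +
          (Real.sqrt Dm)⁻¹ * (2 * (Real.sqrt Dp)⁻¹) *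
            |dphi t (y / Real.sqrt Dm - x / Real.sqrt Dp)|) =
          8 * (Real.sqrt Dp)⁻¹ * phiK t 0 := by
        have hA1 : Integrable (fun y : ℝ => |dphi t (y / Real.sqrt Dp - x / Real.sqrt Dp)|) :=
          (integrable_dphi_sub t (Real.sqrt Dp) (x / Real.sqrt Dp) ht ha).abs
        have hA2 : Integrable (fun y : ℝ => |dphi t (x / Real.sqrt Dp + y / Real.sqrt Dp)|) :=
          (integrable_dphi_addl t (Real.sqrt Dp) (x / Real.sqrt Dp) ht ha).abs
        have hA3 : Integrable (fun y : ℝ => |dphi t (y / Real.sqrt Dm - x / Real.sqrt Dp)|) :=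
          (integrable_dphi_sub t (Real.sqrt Dm) (x / Real.sqrt Dp) ht hb).abs
        have hH1 : Integrable (fun y : ℝ => (Real.sqrt Dp)⁻¹ * (Real.sqrt Dp)⁻¹ *
            (|dphi t (y / Real.sqrt Dp - x / Real.sqrt Dp)| +
              |dphi t (x / Real.sqrt Dp + y / Real.sqrt Dp)|)) :=
          (hA1.add hA2).const_mul _
        have hH2 : Integrable (fun y : ℝ => (Real.sqrt Dm)⁻¹ * (2 * (Real.sqrt Dp)⁻¹) *
            |dphi t (y / Real.sqrt Dm - x / Real.sqrt Dp)|) := hA3.const_mul _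
        rw [integral_add hH1 hH2]
        rw [integral_const_mul, integral_const_mul]
        rw [integral_add hA1 hA2]
        rw [integral_abs_dphi_sub t (Real.sqrt Dp) (x / Real.sqrt Dp) ht ha,
          integral_abs_dphi_addl t (Real.sqrt Dp) (x / Real.sqrt Dp) ht ha,
          integral_abs_dphi_sub t (Real.sqrt Dm) (x / Real.sqrt Dp) ht hb]
        have hsqa : (Real.sqrt Dp)⁻¹ * Real.sqrt Dp = 1 := inv_mul_cancel₀ ha.ne'
        have hsqb : (Real.sqrt Dm)⁻¹ * Real.sqrt Dm = 1 := inv_mul_cancel₀ hb.ne'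
        linear_combination (4 * phiK t 0 * (Real.sqrt Dp)⁻¹) * hsqa +
          (4 * phiK t 0 * (Real.sqrt Dp)⁻¹) * hsqb
      linarith
    -- decomposition and final estimate
    have hdecomp : ∫ y : ℝ, u₀ y * kerD Dp Dm α t x y =
        (∫ y : ℝ, (u₀ y - u₀ 0) * kerD Dp Dm α t x y) +
          u₀ 0 * ∫ y : ℝ, kerD Dp Dm α t x y := by
      rw [← integral_const_mul, ← integral_add hIsub (hIdk.const_mul (u₀ 0))]
      exact integral_congr_ae (Filter.Eventually.of_forall fun y => by ring)
    rw [hdecomp, hzero, mul_zero, add_zero]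
    have hphi0 : phiK t 0 = (Real.sqrt (2 * Real.pi * t))⁻¹ := by
      simp [phiK]
    have hle : (Real.sqrt (2 * Real.pi * t))⁻¹ ≤ (Real.sqrt t)⁻¹ := by
      apply inv_anti₀ (Real.sqrt_pos.2 ht)
      apply Real.sqrt_le_sqrt
      nlinarith [Real.pi_gt_three]
    calc |∫ y : ℝ, (u₀ y - u₀ 0) * kerD Dp Dm α t x y|
        ≤ ∫ y : ℝ, |(u₀ y - u₀ 0) * kerD Dp Dm α t x y| := by
          rw [← Real.norm_eq_abs]
          refine (norm_integral_le_integral_norm _).trans (le_of_eq ?_)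
          exact integral_congr_ae (Filter.Eventually.of_forall fun y => Real.norm_eq_abs _)
      _ ≤ ∫ y : ℝ, I1 * |kerD Dp Dm α t x y| :=
          integral_mono hIsub.abs (hIdk.abs.const_mul I1)
            (fun y => by
              rw [abs_mul]
              exact mul_le_mul_of_nonneg_right (hbd y) (abs_nonneg _))
      _ = I1 * ∫ y : ℝ, |kerD Dp Dm α t x y| := integral_const_mul I1 _
      _ ≤ I1 * (8 * (Real.sqrt Dp)⁻¹ * phiK t 0) :=
          mul_le_mul_of_nonneg_left habsint hI1
      _ ≤ 8 / Real.sqrt Dp / Real.sqrt t * I1 := by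
          rw [hphi0]
          have h8 : 8 / Real.sqrt Dp / Real.sqrt t = 8 * (Real.sqrt Dp)⁻¹ * (Real.sqrt t)⁻¹ := by
            ring
          rw [h8]
          have h9 : 8 * (Real.sqrt Dp)⁻¹ * (Real.sqrt (2 * Real.pi * t))⁻¹ ≤
              8 * (Real.sqrt Dp)⁻¹ * (Real.sqrt t)⁻¹ :=
            mul_le_mul_of_nonneg_left hle (by positivity)
          calc I1 * (8 * (Real.sqrt Dp)⁻¹ * (Real.sqrt (2 * Real.pi * t))⁻¹)
              ≤ I1 * (8 * (Real.sqrt Dp)⁻¹ * (Real.sqrt t)⁻¹) :=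
              mul_le_mul_of_nonneg_left h9 hI1
            _ = 8 * (Real.sqrt Dp)⁻¹ * (Real.sqrt t)⁻¹ * I1 := by ring

lemma u0_osc (u₀ g1 : ℝ → ℝ) (hc : Continuous u₀)
    (hderiv : ∀ x : ℝ, x ≠ 0 → HasDerivAt u₀ (g1 x) x) (hint : Integrable g1) :
    ∀ y : ℝ, |u₀ y - u₀ 0| ≤ ∫ s : ℝ, |g1 s| := by
  have hnn : 0 ≤ ∫ s : ℝ, |g1 s| := integral_nonneg fun s => abs_nonneg _
  intro y
  rcases lt_trichotomy y 0 with hy | rfl | hy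
  · -- y < 0
    have key : ∀ ε : ℝ, y < ε → ε < 0 → |u₀ y - u₀ ε| ≤ ∫ s : ℝ, |g1 s| := by
      intro ε hyε hε
      have hftc : ∫ s in y..ε, g1 s = u₀ ε - u₀ y := by
        apply intervalIntegral.integral_eq_sub_of_hasDerivAt
        · intro s hs
          rw [uIcc_of_le hyε.le] at hs
          exact hderiv s (ne_of_lt (lt_of_le_of_lt hs.2 hε))
        · exact hint.intervalIntegrable
      rw [abs_sub_comm, ← hftc]
      calc |∫ s in y..ε, g1 s| ≤ ∫ s in y..ε, |g1 s| :=
            intervalIntegral.abs_integral_le_integral_abs hyε.le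
        _ = ∫ s in Ioc y ε, |g1 s| := intervalIntegral.integral_of_le hyε.le
        _ ≤ ∫ s : ℝ, |g1 s| :=
            setIntegral_le_integral hint.abs (ae_of_all _ fun s => abs_nonneg _)
    have h1 : Tendsto (fun ε => |u₀ y - u₀ ε|) (nhdsWithin 0 (Iio 0)) (nhds |u₀ y - u₀ 0|) :=
      (((continuous_const.sub hc).abs).tendsto 0).mono_left nhdsWithin_le_nhds
    apply le_of_tendsto h1
    filter_upwards [self_mem_nhdsWithin,
      mem_nhdsWithin_of_mem_nhds (Ioi_mem_nhds hy)] with ε hε1 hε2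
    exact key ε hε2 hε1
  · simpa using hnn
  · -- y > 0
    have key : ∀ ε : ℝ, 0 < ε → ε < y → |u₀ y - u₀ ε| ≤ ∫ s : ℝ, |g1 s| := by
      intro ε hε hεy
      have hftc : ∫ s in ε..y, g1 s = u₀ y - u₀ ε := by
        apply intervalIntegral.integral_eq_sub_of_hasDerivAt
        · intro s hs
          rw [uIcc_of_le hεy.le] at hs
          exact hderiv s (ne_of_gt (lt_of_lt_of_le hε hs.1))
        · exact hint.intervalIntegrable
      rw [← hftc]
      calc |∫ s in ε..y, g1 s| ≤ ∫ s in ε..y, |g1 s| :=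
            intervalIntegral.abs_integral_le_integral_abs hεy.le
        _ = ∫ s in Ioc ε y, |g1 s| := intervalIntegral.integral_of_le hεy.le
        _ ≤ ∫ s : ℝ, |g1 s| :=
            setIntegral_le_integral hint.abs (ae_of_all _ fun s => abs_nonneg _)
    have h1 : Tendsto (fun ε => |u₀ y - u₀ ε|) (nhdsWithin 0 (Ioi 0)) (nhds |u₀ y - u₀ 0|) :=
      (((continuous_const.sub hc).abs).tendsto 0).mono_left nhdsWithin_le_nhds
    apply le_of_tendsto h1
    filter_upwards [self_mem_nhdsWithin,
      mem_nhdsWithin_of_mem_nhds (Iio_mem_nhds hy)] with ε hε1 hε2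
    exact key ε hε1 hε2

lemma qSkew_reflect (Dp Dm α t z y : ℝ) (hDp : 0 < Dp) (hDm : 0 < Dm)
    (hz : z < 0) (hy : y ≠ 0) :
    qSkew Dp Dm α t z y = qSkew Dm Dp (1 - α) t (-z) (-y) := by
  have ha : 0 < Real.sqrt Dp := Real.sqrt_pos.2 hDp
  have hb : 0 < Real.sqrt Dm := Real.sqrt_pos.2 hDm
  have hzm : z / Real.sqrt Dm < 0 := div_neg_of_neg_of_pos hz hb
  rw [qSkew, qSkew]
  rcases lt_or_gt_of_ne hy with hy' | hy'
  · -- y < 0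
    rw [show Dfun Dp Dm y = Dm from if_neg (not_lt.2 hy'.le),
        show Dfun Dp Dm z = Dm from if_neg (not_lt.2 hz.le),
        show Dfun Dm Dp (-y) = Dm from if_pos (neg_pos.2 hy'),
        show Dfun Dm Dp (-z) = Dm from if_pos (neg_pos.2 hz)]
    have e1 : pSkew α t (z / Real.sqrt Dm) (y / Real.sqrt Dm) =
        phiK t (y / Real.sqrt Dm - z / Real.sqrt Dm) -
          (2 * α - 1) * phiK t (z / Real.sqrt Dm + y / Real.sqrt Dm) := by
      rw [pSkew, if_neg (fun h => absurd h.1 (not_lt.2 hzm.le)),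
        if_pos ⟨hzm, div_neg_of_neg_of_pos hy' hb⟩]
    have e2 : pSkew (1 - α) t (-z / Real.sqrt Dm) (-y / Real.sqrt Dm) =
        phiK t (-y / Real.sqrt Dm - -z / Real.sqrt Dm) +
          (2 * (1 - α) - 1) * phiK t (-z / Real.sqrt Dm + -y / Real.sqrt Dm) := by
      rw [pSkew, if_pos ⟨div_pos (neg_pos.2 hz) hb, div_pos (neg_pos.2 hy') hb⟩]
    rw [e1, e2,
      show -y / Real.sqrt Dm - -z / Real.sqrt Dm =
        -(y / Real.sqrt Dm - z / Real.sqrt Dm) by ring,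
      show -z / Real.sqrt Dm + -y / Real.sqrt Dm =
        -(z / Real.sqrt Dm + y / Real.sqrt Dm) by ring,
      phiK_even, phiK_even]
    ring
  · -- y > 0
    have hy'' : 0 < y / Real.sqrt Dp := div_pos hy' ha
    rw [show Dfun Dp Dm y = Dp from if_pos hy',
        show Dfun Dp Dm z = Dm from if_neg (not_lt.2 hz.le),
        show Dfun Dm Dp (-y) = Dp from if_neg (not_lt.2 (by linarith : -y ≤ 0)),
        show Dfun Dm Dp (-z) = Dm from if_pos (neg_pos.2 hz)]
    have e1 : pSkew α t (z / Real.sqrt Dm) (y / Real.sqrt Dp) =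
        2 * α * phiK t (y / Real.sqrt Dp - z / Real.sqrt Dm) := by
      rw [pSkew, if_neg (fun h => absurd h.1 (not_lt.2 hzm.le)),
        if_neg (fun h => absurd h.2 (not_lt.2 hy''.le)),
        if_pos ⟨hzm.le, hy''⟩]
    have e2 : pSkew (1 - α) t (-z / Real.sqrt Dm) (-y / Real.sqrt Dp) =
        2 * (1 - (1 - α)) * phiK t (-y / Real.sqrt Dp - -z / Real.sqrt Dm) := by
      have hx' : 0 < -z / Real.sqrt Dm := div_pos (neg_pos.2 hz) hb
      have hy3 : -y / Real.sqrt Dp < 0 := div_neg_of_neg_of_pos (by linarith) ha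
      rw [pSkew, if_neg (fun h => absurd h.2 (not_lt.2 hy3.le)),
        if_neg (fun h => absurd h.1 (not_lt.2 hx'.le)),
        if_neg (fun h => absurd h.1 (not_le.2 hx'))]
    rw [e1, e2,
      show -y / Real.sqrt Dp - -z / Real.sqrt Dm =
        -(y / Real.sqrt Dp - z / Real.sqrt Dm) by ring,
      phiK_even]
    ring

/-- For `u₀ ∈ W²`, the spatial derivative of `u(t,x) = ∫ u₀(y) q^α(t,x,y) dy` satisfies
`|∂u/∂x(t,x)| ≤ (C/√t)(‖u₀′‖₁ + ‖u₀″‖₁)` for `t ∈ (0,T]`, uniformly in `x ≠ 0`. -/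
theorem space_derivative_bound (lam Dp Dm T : ℝ) (hlam : lam ∈ Set.Ioo (0 : ℝ) 1)
    (hDp : 0 < Dp) (hDm : 0 < Dm) (hT : 0 < T)
    (u₀ g1 g2 : ℝ → ℝ) (hW : MemW2 lam u₀ g1 g2) :
    ∃ C : ℝ, 0 < C ∧ ∀ t ∈ Set.Ioc 0 T, ∀ x : ℝ, x ≠ 0 →
      |deriv (fun z => ∫ y : ℝ, u₀ y * qSkew Dp Dm (alphaOf lam Dp Dm) t z y) x|
        ≤ C / Real.sqrt t * ((∫ y : ℝ, |g1 y|) + ∫ y : ℝ, |g2 y|) := by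
  obtain ⟨hcont, hder1, -, -, -, hg1int, -, -, -, -⟩ := hW
  have ha : 0 < Real.sqrt Dp := Real.sqrt_pos.2 hDp
  have hb : 0 < Real.sqrt Dm := Real.sqrt_pos.2 hDm
  have hden : 0 < lam * Real.sqrt Dm + (1 - lam) * Real.sqrt Dp := by
    have h1 : 0 < lam * Real.sqrt Dm := mul_pos hlam.1 hb
    have h2 : 0 < (1 - lam) * Real.sqrt Dp := mul_pos (by linarith [hlam.2]) ha
    linarith
  have hα0 : 0 ≤ alphaOf lam Dp Dm := by
    rw [alphaOf]
    exact div_nonneg (mul_nonneg hlam.1.le (Real.sqrt_nonneg _)) hden.le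
  have hα1 : alphaOf lam Dp Dm ≤ 1 := by
    rw [alphaOf, div_le_one hden]
    nlinarith [mul_pos (by linarith [hlam.2] : (0:ℝ) < 1 - lam) ha]
  refine ⟨8 * ((Real.sqrt Dp)⁻¹ + (Real.sqrt Dm)⁻¹) + 1, by positivity, ?_⟩
  intro t htT x hx
  obtain ⟨ht, -⟩ := htT
  have hst : 0 < Real.sqrt t := Real.sqrt_pos.2 ht
  have hbd := u0_osc u₀ g1 hcont hder1 hg1int
  have hI1 : 0 ≤ ∫ s : ℝ, |g1 s| := integral_nonneg fun s => abs_nonneg _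
  have hI2 : 0 ≤ ∫ s : ℝ, |g2 s| := integral_nonneg fun s => abs_nonneg _
  have hia : (0:ℝ) ≤ (Real.sqrt Dp)⁻¹ := inv_nonneg.2 ha.le
  have hib : (0:ℝ) ≤ (Real.sqrt Dm)⁻¹ := inv_nonneg.2 hb.le
  rcases hx.lt_or_gt with hxneg | hxpos
  · -- x < 0 : use reflection
    obtain ⟨d, hd, hdle⟩ := lemA Dm Dp (1 - alphaOf lam Dp Dm) t (-x) hDm hDp ht
      (by linarith) (by linarith) (by linarith) (fun y => u₀ (-y))
      (hcont.comp continuous_neg) (∫ s : ℝ, |g1 s|)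
      (fun y => by simpa using hbd (-y))
    have h0 : ∀ᵐ y : ℝ, y ≠ (0:ℝ) := by
      rw [ae_iff]
      have he : {y : ℝ | ¬ y ≠ 0} = {0} := by ext y; simp
      rw [he]
      exact measure_singleton 0
    have hFG : ∀ z : ℝ, z < 0 → (∫ y : ℝ, u₀ y * qSkew Dp Dm (alphaOf lam Dp Dm) t z y) =
        ∫ y : ℝ, u₀ (-y) * qSkew Dm Dp (1 - alphaOf lam Dp Dm) t (-z) y := by
      intro z hz
      rw [← integral_neg_eq_self
        (fun y => u₀ (-y) * qSkew Dm Dp (1 - alphaOf lam Dp Dm) t (-z) y) volume]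
      apply integral_congr_ae
      filter_upwards [h0] with y hy0
      show u₀ y * qSkew Dp Dm (alphaOf lam Dp Dm) t z y =
        u₀ (- -y) * qSkew Dm Dp (1 - alphaOf lam Dp Dm) t (-z) (-y)
      rw [neg_neg, qSkew_reflect Dp Dm (alphaOf lam Dp Dm) t z y hDp hDm hz hy0]
    have hGneg : HasDerivAt (fun z : ℝ =>
        ∫ y : ℝ, u₀ (-y) * qSkew Dm Dp (1 - alphaOf lam Dp Dm) t (-z) y) (d * (-1)) x := by
      have h1 := HasDerivAt.comp x hd (hasDerivAt_neg x)
      exact h1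
    have hF : HasDerivAt (fun z => ∫ y : ℝ, u₀ y * qSkew Dp Dm (alphaOf lam Dp Dm) t z y)
        (d * (-1)) x := by
      apply hGneg.congr_of_eventuallyEq
      filter_upwards [Iio_mem_nhds hxneg] with z hz
      exact hFG z hz
    rw [hF.deriv]
    have habs : |d * (-1)| = |d| := by rw [abs_mul]; simp
    rw [habs]
    calc |d| ≤ 8 / Real.sqrt Dm / Real.sqrt t * ∫ s : ℝ, |g1 s| := hdle
      _ ≤ (8 * ((Real.sqrt Dp)⁻¹ + (Real.sqrt Dm)⁻¹) + 1) / Real.sqrt t *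
          ((∫ y : ℝ, |g1 y|) + ∫ y : ℝ, |g2 y|) := by
        rw [show 8 / Real.sqrt Dm / Real.sqrt t * ∫ s : ℝ, |g1 s| =
          8 * (Real.sqrt Dm)⁻¹ * (∫ s : ℝ, |g1 s|) * (Real.sqrt t)⁻¹ by ring]
        rw [show (8 * ((Real.sqrt Dp)⁻¹ + (Real.sqrt Dm)⁻¹) + 1) / Real.sqrt t *
          ((∫ y : ℝ, |g1 y|) + ∫ y : ℝ, |g2 y|) =
          (8 * ((Real.sqrt Dp)⁻¹ + (Real.sqrt Dm)⁻¹) + 1) *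
            ((∫ y : ℝ, |g1 y|) + ∫ y : ℝ, |g2 y|) * (Real.sqrt t)⁻¹ by ring]
        apply mul_le_mul_of_nonneg_right _ (inv_nonneg.2 hst.le)
        nlinarith [hI1, hI2, hia, hib]
  · -- x > 0 : direct
    obtain ⟨d, hd, hdle⟩ := lemA Dp Dm (alphaOf lam Dp Dm) t x hDp hDm ht hα0 hα1 hxpos
      u₀ hcont (∫ s : ℝ, |g1 s|) hbd
    rw [hd.deriv]
    calc |d| ≤ 8 / Real.sqrt Dp / Real.sqrt t * ∫ s : ℝ, |g1 s| := hdle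
      _ ≤ (8 * ((Real.sqrt Dp)⁻¹ + (Real.sqrt Dm)⁻¹) + 1) / Real.sqrt t *
          ((∫ y : ℝ, |g1 y|) + ∫ y : ℝ, |g2 y|) := by
        rw [show 8 / Real.sqrt Dp / Real.sqrt t * ∫ s : ℝ, |g1 s| =
          8 * (Real.sqrt Dp)⁻¹ * (∫ s : ℝ, |g1 s|) * (Real.sqrt t)⁻¹ by ring]
        rw [show (8 * ((Real.sqrt Dp)⁻¹ + (Real.sqrt Dm)⁻¹) + 1) / Real.sqrt t *
          ((∫ y : ℝ, |g1 y|) + ∫ y : ℝ, |g2 y|) =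
          (8 * ((Real.sqrt Dp)⁻¹ + (Real.sqrt Dm)⁻¹) + 1) *
            ((∫ y : ℝ, |g1 y|) + ∫ y : ℝ, |g2 y|) * (Real.sqrt t)⁻¹ by ring]
        apply mul_le_mul_of_nonneg_right _ (inv_nonneg.2 hst.le)
        nlinarith [hI1, hI2, hia, hib]
end

section
/- Let a < b be real numbers and f: [a,b] → ℝ be three times continuously differentiable. Then |f′((a+b)/2) − (f(b) − f(a))/(b − a)| ≤ ((b − a)/8)·∫_a^b |f‴(s)| ds. -/
open MeasureTheory Set intervalIntegral

lemma taylor_int_rem (a b x : ℝ) (hab : a < b) (f : ℝ → ℝ)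
    (hf : ContDiffOn ℝ 3 f (Set.Icc a b)) (hx : x ∈ Set.Icc a b) :
    f x - taylorWithinEval f 2 (Set.Icc a b) ((a + b) / 2) x
      = ∫ t in ((a + b) / 2)..x,
          ((2:ℝ)⁻¹ * (x - t) ^ 2) * iteratedDerivWithin 3 f (Set.Icc a b) t := by
  set m : ℝ := (a + b) / 2 with hm
  have hmem : m ∈ Set.Icc a b := ⟨by simp only [hm]; linarith, by simp only [hm]; linarith⟩
  have hsub : Set.uIcc m x ⊆ Set.Icc a b := Set.uIcc_subset_Icc hmem hx
  have hF : ContinuousOn (iteratedDerivWithin 3 f (Set.Icc a b)) (Set.Icc a b) :=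
    hf.continuousOn_iteratedDerivWithin le_rfl (uniqueDiffOn_Icc hab)
  have hf2 : ContDiffOn ℝ 2 f (Set.Icc a b) := hf.of_le (by norm_num)
  have hf2' : DifferentiableOn ℝ (iteratedDerivWithin 2 f (Set.Icc a b)) (Set.Icc a b) :=
    hf.differentiableOn_iteratedDerivWithin (by norm_num) (uniqueDiffOn_Icc hab)
  have key := intervalIntegral.integral_eq_sub_of_hasDeriv_right
    (f := fun t => taylorWithinEval f 2 (Set.Icc a b) t x)
    (f' := fun t => ((2:ℝ)⁻¹ * (x - t) ^ 2) * iteratedDerivWithin 3 f (Set.Icc a b) t)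
    (a := m) (b := x)
    ((continuousOn_taylorWithinEval (uniqueDiffOn_Icc hab) hf2).mono hsub)
    (fun t ht => by
      have hIoo : t ∈ Set.Ioo a b := by
        constructor
        · exact lt_of_le_of_lt (le_min hmem.1 hx.1) ht.1
        · exact lt_of_lt_of_le ht.2 (max_le hmem.2 hx.2)
      have := taylorWithinEval_hasDerivAt_Ioo x hab hIoo hf2
        (hf2'.mono Set.Ioo_subset_Icc_self)
      norm_num [Nat.factorial, smul_eq_mul] at this ⊢
      simpa using this.hasDerivWithinAt
      )
    (((continuousOn_const.mul ((continuousOn_const.sub continuousOn_id).pow 2)).mul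
        (hF.mono hsub)).intervalIntegrable)
  simp only [key, taylorWithinEval_self]

set_option maxHeartbeats 1000000 in
/-- Midpoint rule error: for `f` three times continuously differentiable on `[a,b]`,
`|f′((a+b)/2) − (f(b) − f(a))/(b − a)| ≤ ((b−a)/8)·∫_a^b |f‴(s)| ds`. -/
theorem midpoint_derivative_estimate (a b : ℝ) (hab : a < b) (f : ℝ → ℝ)
    (hf : ContDiffOn ℝ 3 f (Set.Icc a b)) :
    |derivWithin f (Set.Icc a b) ((a + b) / 2) - (f b - f a) / (b - a)|
      ≤ (b - a) / 8 * ∫ s in a..b, |iteratedDerivWithin 3 f (Set.Icc a b) s| := by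
  have hba : (0:ℝ) < b - a := by linarith
  set m : ℝ := (a + b) / 2 with hm
  have ham : a ≤ m := by rw [hm]; linarith
  have hmb : m ≤ b := by rw [hm]; linarith
  have hmem : m ∈ Set.Icc a b := ⟨ham, hmb⟩
  have haI : a ∈ Set.Icc a b := Set.left_mem_Icc.2 hab.le
  have hbI : b ∈ Set.Icc a b := Set.right_mem_Icc.2 hab.le
  set F := iteratedDerivWithin 3 f (Set.Icc a b) with hF
  have hFc : ContinuousOn F (Set.Icc a b) :=
    hf.continuousOn_iteratedDerivWithin le_rfl (uniqueDiffOn_Icc hab)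
  set Rb := ∫ t in m..b, ((2:ℝ)⁻¹ * (b - t) ^ 2) * F t with hRb
  set Ra := ∫ t in m..a, ((2:ℝ)⁻¹ * (a - t) ^ 2) * F t with hRa
  have hb' : f b - taylorWithinEval f 2 (Set.Icc a b) m b = Rb :=
    taylor_int_rem a b b hab f hf hbI
  have ha' : f a - taylorWithinEval f 2 (Set.Icc a b) m a = Ra :=
    taylor_int_rem a b a hab f hf haI
  have hTb := taylor_within_apply f 2 (Set.Icc a b) m b
  have hTa := taylor_within_apply f 2 (Set.Icc a b) m a
  simp only [Finset.sum_range_succ, Finset.sum_range_zero, zero_add, Nat.factorial,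
    smul_eq_mul] at hTb hTa
  have hdiff : taylorWithinEval f 2 (Set.Icc a b) m b - taylorWithinEval f 2 (Set.Icc a b) m a
      = (b - a) * iteratedDerivWithin 1 f (Set.Icc a b) m := by
    rw [hTb, hTa, hm]
    push_cast
    ring
  have h1 : derivWithin f (Set.Icc a b) m = iteratedDerivWithin 1 f (Set.Icc a b) m :=
    (congrFun (iteratedDerivWithin_one (f := f) (s := Set.Icc a b)) m).symm
  have key : derivWithin f (Set.Icc a b) m - (f b - f a) / (b - a) = (Ra - Rb) / (b - a) := by
    have e : f b - f a = (b - a) * iteratedDerivWithin 1 f (Set.Icc a b) m + Rb - Ra := by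
      linarith
    rw [h1, e]
    field_simp
    ring
  rw [key, abs_div, abs_of_pos hba]
  -- integrability facts
  have hIb : IntervalIntegrable (fun t => |F t|) volume m b :=
    ((hFc.mono (Set.uIcc_subset_Icc hmem hbI)).abs).intervalIntegrable
  have hIa : IntervalIntegrable (fun t => |F t|) volume a m :=
    ((hFc.mono (Set.uIcc_subset_Icc haI hmem)).abs).intervalIntegrable
  have hRb_bound : |Rb| ≤ (b - a) ^ 2 / 8 * ∫ t in m..b, |F t| := by
    calc |Rb| ≤ ∫ t in m..b, |((2:ℝ)⁻¹ * (b - t) ^ 2) * F t| := by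
          rw [hRb]; exact intervalIntegral.abs_integral_le_integral_abs hmb
      _ ≤ ∫ t in m..b, (b - a) ^ 2 / 8 * |F t| := by
          apply intervalIntegral.integral_mono_on hmb
          · exact (((continuousOn_const.mul
              ((continuousOn_const.sub continuousOn_id).pow 2)).mul
              (hFc.mono (Set.uIcc_subset_Icc hmem hbI))).abs).intervalIntegrable
          · exact continuousOn_const.mul ((hFc.mono (Set.uIcc_subset_Icc hmem hbI)).abs)
              |>.intervalIntegrable
          · intro t ht
            rw [abs_mul]
            apply mul_le_mul_of_nonneg_right _ (abs_nonneg _)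
            rw [abs_of_nonneg (by positivity)]
            have h1 : t ≤ b := ht.2
            have h2 : m ≤ t := ht.1
            rw [hm] at h2
            nlinarith
      _ = (b - a) ^ 2 / 8 * ∫ t in m..b, |F t| := intervalIntegral.integral_const_mul _ _
  have hRa_bound : |Ra| ≤ (b - a) ^ 2 / 8 * ∫ t in a..m, |F t| := by
    have hsymm : Ra = -∫ t in a..m, ((2:ℝ)⁻¹ * (a - t) ^ 2) * F t := by
      rw [hRa, intervalIntegral.integral_symm]
    rw [hsymm, abs_neg]
    calc |∫ t in a..m, ((2:ℝ)⁻¹ * (a - t) ^ 2) * F t|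
        ≤ ∫ t in a..m, |((2:ℝ)⁻¹ * (a - t) ^ 2) * F t| :=
          intervalIntegral.abs_integral_le_integral_abs ham
      _ ≤ ∫ t in a..m, (b - a) ^ 2 / 8 * |F t| := by
          apply intervalIntegral.integral_mono_on ham
          · exact (((continuousOn_const.mul
              ((continuousOn_const.sub continuousOn_id).pow 2)).mul
              (hFc.mono (Set.uIcc_subset_Icc haI hmem))).abs).intervalIntegrable
          · exact continuousOn_const.mul ((hFc.mono (Set.uIcc_subset_Icc haI hmem)).abs)
              |>.intervalIntegrable
          · intro t ht
            rw [abs_mul]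
            apply mul_le_mul_of_nonneg_right _ (abs_nonneg _)
            rw [abs_of_nonneg (by positivity)]
            have h1 : a ≤ t := ht.1
            have h2 : t ≤ m := ht.2
            rw [hm] at h2
            nlinarith
      _ = (b - a) ^ 2 / 8 * ∫ t in a..m, |F t| := intervalIntegral.integral_const_mul _ _
  have hsplit : (∫ t in a..m, |F t|) + (∫ t in m..b, |F t|) = ∫ t in a..b, |F t| :=
    intervalIntegral.integral_add_adjacent_intervals hIa hIb
  have habs : |Ra - Rb| ≤ |Ra| + |Rb| := abs_sub _ _
  rw [div_le_iff₀ hba]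
  have hInn : (0:ℝ) ≤ ∫ t in a..b, |F t| :=
    intervalIntegral.integral_nonneg hab.le (fun t _ => abs_nonneg (F t))
  nlinarith [hRa_bound, hRb_bound, hsplit, habs]
end

section
/- Let a < b be real numbers and f: [a,b] → ℝ be twice continuously differentiable. Then |(f(a) + f(b))/2 − f((a+b)/2)| ≤ ((b − a)/4)·∫_a^b |f″(s)| ds. -/
open MeasureTheory Set intervalIntegral

/-- Trapezoid–midpoint error: for `f` twice continuously differentiable on `[a,b]`,
`|(f(a) + f(b))/2 − f((a+b)/2)| ≤ ((b−a)/4)·∫_a^b |f″(s)| ds`. -/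
theorem trapezoid_midpoint_estimate (a b : ℝ) (hab : a < b) (f : ℝ → ℝ)
    (hf : ContDiffOn ℝ 2 f (Set.Icc a b)) :
    |(f a + f b) / 2 - f ((a + b) / 2)|
      ≤ (b - a) / 4 * ∫ s in a..b, |iteratedDerivWithin 2 f (Set.Icc a b) s| := by
  set I := Set.Icc a b with hIdef
  set m : ℝ := (a + b) / 2 with hmdef
  have ham : a < m := by rw [hmdef]; linarith
  have hmb : m < b := by rw [hmdef]; linarith
  have hU : UniqueDiffOn ℝ I := uniqueDiffOn_Icc hab
  set f' := derivWithin f I with hf'def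
  set f'' := derivWithin f' I with hf''def
  have hcf : ContinuousOn f I := hf.continuousOn
  have hdf : DifferentiableOn ℝ f I := hf.differentiableOn (by norm_num)
  have hf1 : ContDiffOn ℝ 1 f' I := hf.derivWithin hU (by norm_num)
  have hcf' : ContinuousOn f' I := hf1.continuousOn
  have hdf' : DifferentiableOn ℝ f' I := hf1.differentiableOn (by norm_num)
  have hcf'' : ContinuousOn f'' I := hf1.continuousOn_derivWithin hU le_rfl
  -- derivative facts at interior points
  have hder : ∀ x ∈ Set.Ioo a b, HasDerivAt f (f' x) x ∧ HasDerivAt f' (f'' x) x := by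
    intro x hx
    have hxI : x ∈ I := Set.mem_Icc_of_Ioo hx
    have hIx : I ∈ nhds x := Icc_mem_nhds hx.1 hx.2
    exact ⟨((hdf x hxI).hasDerivWithinAt).hasDerivAt hIx,
      ((hdf' x hxI).hasDerivWithinAt).hasDerivAt hIx⟩
  have hsub1 : Set.Icc m b ⊆ I := Set.Icc_subset_Icc ham.le le_rfl
  have hsub2 : Set.Icc a m ⊆ I := Set.Icc_subset_Icc le_rfl hmb.le
  -- integrability
  have hint1 : IntervalIntegrable (fun t => (b - t) * f'' t) volume m b := by
    apply ContinuousOn.intervalIntegrable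
    rw [Set.uIcc_of_le hmb.le]
    exact (continuousOn_const.sub continuousOn_id).mul (hcf''.mono hsub1)
  have hint2 : IntervalIntegrable (fun t => (a - t) * f'' t) volume a m := by
    apply ContinuousOn.intervalIntegrable
    rw [Set.uIcc_of_le ham.le]
    exact (continuousOn_const.sub continuousOn_id).mul (hcf''.mono hsub2)
  -- FTC on [m,b]
  have eq1 : ∫ t in m..b, (b - t) * f'' t = f b - f m - (b - m) * f' m := by
    have := integral_eq_sub_of_hasDeriv_right_of_le hmb.le
      (f := fun t => f t + (b - t) * f' t) (f' := fun t => (b - t) * f'' t)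
      ((hcf.mono hsub1).add ((continuousOn_const.sub continuousOn_id).mul (hcf'.mono hsub1)))
      (fun x hx => by
        have hx' : x ∈ Set.Ioo a b := ⟨ham.trans hx.1, hx.2⟩
        obtain ⟨h1, h2⟩ := hder x hx'
        have : HasDerivAt (fun t => f t + (b - t) * f' t) ((b - x) * f'' x) x := by
          have := h1.add ((((hasDerivAt_id x).const_sub b)).mul h2)
          refine this.congr_deriv ?_
          simp only [id_eq]
          ring
        exact this.hasDerivWithinAt)
      hint1
    rw [this]; ring
  -- FTC on [a,m]
  have eq2 : ∫ t in a..m, (a - t) * f'' t = f m - f a + (a - m) * f' m := by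
    have := integral_eq_sub_of_hasDeriv_right_of_le ham.le
      (f := fun t => f t + (a - t) * f' t) (f' := fun t => (a - t) * f'' t)
      ((hcf.mono hsub2).add ((continuousOn_const.sub continuousOn_id).mul (hcf'.mono hsub2)))
      (fun x hx => by
        have hx' : x ∈ Set.Ioo a b := ⟨hx.1, hx.2.trans hmb⟩
        obtain ⟨h1, h2⟩ := hder x hx'
        have : HasDerivAt (fun t => f t + (a - t) * f' t) ((a - x) * f'' x) x := by
          have := h1.add ((((hasDerivAt_id x).const_sub a)).mul h2)
          refine this.congr_deriv ?_
          simp only [id_eq]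
          ring
        exact this.hasDerivWithinAt)
      hint2
    rw [this]; ring
  -- key identity
  have key : (f a + f b) / 2 - f m
      = ((∫ t in m..b, (b - t) * f'' t) - ∫ t in a..m, (a - t) * f'' t) / 2 := by
    rw [eq1, eq2]; ring
  -- abs integrability
  have habsc : ContinuousOn (fun t => |f'' t|) I := hcf''.abs
  have hintabs1 : IntervalIntegrable (fun t => |f'' t|) volume m b := by
    apply ContinuousOn.intervalIntegrable
    rw [Set.uIcc_of_le hmb.le]; exact habsc.mono hsub1
  have hintabs2 : IntervalIntegrable (fun t => |f'' t|) volume a m := by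
    apply ContinuousOn.intervalIntegrable
    rw [Set.uIcc_of_le ham.le]; exact habsc.mono hsub2
  have hintprod1 : IntervalIntegrable (fun t => |(b - t) * f'' t|) volume m b := hint1.abs
  have hintprod2 : IntervalIntegrable (fun t => |(a - t) * f'' t|) volume a m := hint2.abs
  have hc : (0:ℝ) ≤ (b - a) / 2 := by linarith
  -- bounds
  have bd1 : |∫ t in m..b, (b - t) * f'' t| ≤ (b - a) / 2 * ∫ t in m..b, |f'' t| := by
    calc |∫ t in m..b, (b - t) * f'' t| ≤ ∫ t in m..b, |(b - t) * f'' t| :=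
          intervalIntegral.abs_integral_le_integral_abs hmb.le
      _ ≤ ∫ t in m..b, (b - a) / 2 * |f'' t| := by
          apply intervalIntegral.integral_mono_on hmb.le hintprod1
            (hintabs1.const_mul _)
          intro t ht
          rw [abs_mul]
          apply mul_le_mul_of_nonneg_right _ (abs_nonneg _)
          rw [abs_of_nonneg (by linarith [ht.2] : (0:ℝ) ≤ b - t)]
          have ht1 : (a + b) / 2 ≤ t := ht.1
          linarith
      _ = (b - a) / 2 * ∫ t in m..b, |f'' t| := intervalIntegral.integral_const_mul _ _
  have bd2 : |∫ t in a..m, (a - t) * f'' t| ≤ (b - a) / 2 * ∫ t in a..m, |f'' t| := by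
    calc |∫ t in a..m, (a - t) * f'' t| ≤ ∫ t in a..m, |(a - t) * f'' t| :=
          intervalIntegral.abs_integral_le_integral_abs ham.le
      _ ≤ ∫ t in a..m, (b - a) / 2 * |f'' t| := by
          apply intervalIntegral.integral_mono_on ham.le hintprod2
            (hintabs2.const_mul _)
          intro t ht
          rw [abs_mul]
          apply mul_le_mul_of_nonneg_right _ (abs_nonneg _)
          rw [abs_of_nonpos (by linarith [ht.1] : a - t ≤ 0)]
          have ht2 : t ≤ (a + b) / 2 := ht.2
          linarith
      _ = (b - a) / 2 * ∫ t in a..m, |f'' t| := intervalIntegral.integral_const_mul _ _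
  -- additivity
  have hadd : (∫ t in a..m, |f'' t|) + (∫ t in m..b, |f'' t|) = ∫ t in a..b, |f'' t| :=
    intervalIntegral.integral_add_adjacent_intervals hintabs2 hintabs1
  -- rewrite goal's integrand
  have hcongr : (∫ s in a..b, |iteratedDerivWithin 2 f I s|) = ∫ t in a..b, |f'' t| := by
    apply intervalIntegral.integral_congr
    intro x hx
    rw [Set.uIcc_of_le hab.le] at hx
    have hx' : x ∈ I := hx
    have h2x : iteratedDerivWithin 2 f I x = f'' x := by
      rw [show (2:ℕ) = 1 + 1 from rfl, iteratedDerivWithin_succ]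
      exact derivWithin_congr (fun y hy => congrFun iteratedDerivWithin_one y)
        (congrFun iteratedDerivWithin_one x)
    simp only [h2x]
  rw [hcongr, ← hadd, key]
  have h5 : |(∫ t in m..b, (b - t) * f'' t) - ∫ t in a..m, (a - t) * f'' t|
      ≤ |∫ t in m..b, (b - t) * f'' t| + |∫ t in a..m, (a - t) * f'' t| :=
    abs_sub _ _
  rw [abs_div, abs_two]
  linarith [bd1, bd2, h5]
end

section
/- Let u₀: ℝ → ℝ be continuous at 0, four times continuously differentiable on ℝ∖{0} with u₀ and its first four derivatives bounded there, and with u₀^(i) ∈ L¹(ℝ) ∩ L²(ℝ) for i = 1,…,4. Then there exists a constant C > 0, depending only on u₀, such that for every δ ∈ (0,1) there exists a function u_δ: ℝ → ℝ which is four times continuously differentiable on ℝ with bounded derivatives, satisfies u_δ(x) = u₀(x) for |x| > 2δ, u_δ(x) = u₀(0) for |x| ≤ δ, and ‖u₀^(i) − u_δ^(i)‖_{L¹(ℝ)} ≤ C·δ^{2−i} for every i = 0, 1, 2, 3, 4. -/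
open MeasureTheory Set Filter

private lemma iterDeriv_congr_nhds {f g : ℝ → ℝ} {x : ℝ} (h : f =ᶠ[nhds x] g) (n : ℕ) :
    iteratedDeriv n f =ᶠ[nhds x] iteratedDeriv n g := by
  induction n with
  | zero => simpa [iteratedDeriv_zero] using h
  | succ n ih => simpa only [iteratedDeriv_succ] using ih.deriv

private lemma iterDerivWithin_isOpen' {f : ℝ → ℝ} {s : Set ℝ} {x : ℝ} (hs : IsOpen s)
    (hx : x ∈ s) (n : ℕ) : iteratedDerivWithin n f s x = iteratedDeriv n f x := by
  simp only [iteratedDerivWithin, iteratedDeriv, iteratedFDerivWithin_of_isOpen n hs hx]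

private lemma iteratedDeriv_const'' (n : ℕ) (c : ℝ) :
    ∀ x : ℝ, iteratedDeriv (n+1) (fun _ : ℝ => c) x = 0 := by
  induction n generalizing c with
  | zero => intro x; rw [iteratedDeriv_succ, iteratedDeriv_zero]; simp
  | succ m ih =>
    intro x
    rw [iteratedDeriv_succ']
    simp only [deriv_const']
    exact ih 0 x

private lemma mvt_pos {f f' : ℝ → ℝ} {M : ℝ}
    (hc : ContinuousAt f 0) (hd : ∀ y : ℝ, y ≠ 0 → HasDerivAt f (f' y) y)
    (hb : ∀ y : ℝ, y ≠ 0 → |f' y| ≤ M) {x : ℝ} (hx : 0 < x) :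
    |f x - f 0| ≤ M * x := by
  have key : ∀ ε ∈ Set.Ioo (0:ℝ) x, |f x - f ε| ≤ M * (x - ε) := by
    intro ε hε
    have h1 : ∀ y ∈ Set.Icc ε x, HasDerivWithinAt f (f' y) (Set.Icc ε x) y := fun y hy =>
      (hd y (lt_of_lt_of_le hε.1 hy.1).ne').hasDerivWithinAt
    have := Convex.norm_image_sub_le_of_norm_hasDerivWithin_le h1
      (fun y hy => by rw [Real.norm_eq_abs]; exact hb y (lt_of_lt_of_le hε.1 hy.1).ne')
      (convex_Icc ε x) (Set.left_mem_Icc.mpr hε.2.le) (Set.right_mem_Icc.mpr hε.2.le)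
    rw [Real.norm_eq_abs, Real.norm_eq_abs, abs_of_pos (by linarith [hε.2] : (0:ℝ) < x - ε)] at this
    exact this
  have hlim : Tendsto (fun ε => M * (x - ε) + |f ε - f 0|) (nhdsWithin 0 (Set.Ioi 0))
      (nhds (M * x)) := by
    have h1 : Tendsto (fun ε : ℝ => M * (x - ε)) (nhds 0) (nhds (M * x)) := by
      have hcn : Continuous (fun ε : ℝ => M * (x - ε)) :=
        continuous_const.mul (continuous_const.sub continuous_id)
      simpa using hcn.tendsto (0:ℝ)
    have h2 : Tendsto (fun ε : ℝ => |f ε - f 0|) (nhds 0) (nhds 0) := by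
      have h3 : Tendsto (fun ε : ℝ => f ε - f 0) (nhds 0) (nhds 0) := by
        simpa using hc.tendsto.sub (tendsto_const_nhds (x := f 0))
      simpa using h3.abs
    have := h1.add h2
    rw [add_zero] at this
    exact this.mono_left nhdsWithin_le_nhds
  refine ge_of_tendsto hlim ?_
  filter_upwards [Ioo_mem_nhdsGT_of_mem (by constructor <;> [rfl; exact hx] : (0:ℝ) ∈ Set.Ico 0 x)]
    with ε hε
  calc |f x - f 0| ≤ |f x - f ε| + |f ε - f 0| := abs_sub_le _ _ _
    _ ≤ M * (x - ε) + |f ε - f 0| := by gcongr ?_ + _; exact key ε hε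

private lemma mvt_abs {f f' : ℝ → ℝ} {M : ℝ}
    (hc : ContinuousAt f 0) (hd : ∀ y : ℝ, y ≠ 0 → HasDerivAt f (f' y) y)
    (hb : ∀ y : ℝ, y ≠ 0 → |f' y| ≤ M) (x : ℝ) : |f x - f 0| ≤ M * |x| := by
  rcases lt_trichotomy x 0 with h|h|h
  · have hc' : ContinuousAt (fun y : ℝ => f (-y)) 0 :=
      ContinuousAt.comp (by simpa using hc) continuous_neg.continuousAt
    have hd' : ∀ y : ℝ, y ≠ 0 → HasDerivAt (fun z : ℝ => f (-z)) (-(f' (-y))) y := by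
      intro y hy
      have := (hd (-y) (neg_ne_zero.mpr hy)).comp y (hasDerivAt_neg y)
      simpa [mul_comm, Function.comp_def] using this
    have hb' : ∀ y : ℝ, y ≠ 0 → |(-(f' (-y)))| ≤ M := fun y hy => by
      rw [abs_neg]; exact hb (-y) (neg_ne_zero.mpr hy)
    have := mvt_pos hc' hd' hb' (x := -x) (by linarith)
    rw [abs_of_neg h]
    simpa using this
  · simp [h]
  · have := mvt_pos hc hd hb h
    rwa [abs_of_pos h]

set_option maxHeartbeats 3200000 in
/-- Smoothing of the initial data near the interface: for `u₀` continuous at `0`,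
four times continuously differentiable on `ℝ∖{0}` with bounded derivatives
`g1,…,g4 ∈ L¹ ∩ L²`, there is `C > 0` such that for every `δ ∈ (0,1)` there is a
`C⁴` function `u_δ` with bounded derivatives, equal to `u₀` for `|x| > 2δ`, equal to
`u₀(0)` for `|x| ≤ δ`, and with `‖u₀^{(i)} − u_δ^{(i)}‖₁ ≤ C·δ^{2−i}` for `i = 0,…,4`. -/
theorem smoothing_approximation (u₀ g1 g2 g3 g4 : ℝ → ℝ)
    (hcont : ContinuousAt u₀ 0)
    (hd1 : ∀ x : ℝ, x ≠ 0 → HasDerivAt u₀ (g1 x) x)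
    (hd2 : ∀ x : ℝ, x ≠ 0 → HasDerivAt g1 (g2 x) x)
    (hd3 : ∀ x : ℝ, x ≠ 0 → HasDerivAt g2 (g3 x) x)
    (hd4 : ∀ x : ℝ, x ≠ 0 → HasDerivAt g3 (g4 x) x)
    (hg4c : ContinuousOn g4 {(0 : ℝ)}ᶜ)
    (hbdd : ∃ M : ℝ, ∀ x : ℝ, x ≠ 0 →
      |u₀ x| ≤ M ∧ |g1 x| ≤ M ∧ |g2 x| ≤ M ∧ |g3 x| ≤ M ∧ |g4 x| ≤ M)
    (hint : Integrable g1 ∧ Integrable g2 ∧ Integrable g3 ∧ Integrable g4)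
    (hL2 : MemLp g1 2 ∧ MemLp g2 2 ∧ MemLp g3 2 ∧ MemLp g4 2) :
    ∃ C : ℝ, 0 < C ∧ ∀ δ ∈ Set.Ioo (0 : ℝ) 1, ∃ uδ : ℝ → ℝ,
      ContDiff ℝ 4 uδ ∧
      (∀ i : ℕ, i ≤ 4 → ∃ B : ℝ, ∀ x : ℝ, |iteratedDeriv i uδ x| ≤ B) ∧
      (∀ x : ℝ, 2 * δ < |x| → uδ x = u₀ x) ∧
      (∀ x : ℝ, |x| ≤ δ → uδ x = u₀ 0) ∧
      (∫ x : ℝ, |u₀ x - uδ x|) ≤ C * δ ^ 2 ∧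
      (∫ x : ℝ, |g1 x - deriv uδ x|) ≤ C * δ ∧
      (∫ x : ℝ, |g2 x - iteratedDeriv 2 uδ x|) ≤ C ∧
      (∫ x : ℝ, |g3 x - iteratedDeriv 3 uδ x|) ≤ C / δ ∧
      (∫ x : ℝ, |g4 x - iteratedDeriv 4 uδ x|) ≤ C / δ ^ 2 := by
  classical
  -- the set where everything is smooth
  have hsOpen : IsOpen ({(0:ℝ)}ᶜ : Set ℝ) := isOpen_compl_singleton
  -- smoothness chain for u₀
  have c4 : ContDiffOn ℝ 0 g4 ({(0:ℝ)}ᶜ) := contDiffOn_zero.mpr hg4c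
  have c3 : ContDiffOn ℝ 1 g3 ({(0:ℝ)}ᶜ) := by
    rw [show (1 : WithTop ℕ∞) = 0 + 1 by norm_num, contDiffOn_succ_iff_deriv_of_isOpen hsOpen]
    exact ⟨fun x hx => (hd4 x hx).differentiableAt.differentiableWithinAt, by simp,
      c4.congr (fun x hx => (hd4 x hx).deriv)⟩
  have c2 : ContDiffOn ℝ 2 g2 ({(0:ℝ)}ᶜ) := by
    rw [show (2 : WithTop ℕ∞) = 1 + 1 by norm_num, contDiffOn_succ_iff_deriv_of_isOpen hsOpen]
    exact ⟨fun x hx => (hd3 x hx).differentiableAt.differentiableWithinAt, by simp,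
      c3.congr (fun x hx => (hd3 x hx).deriv)⟩
  have c1 : ContDiffOn ℝ 3 g1 ({(0:ℝ)}ᶜ) := by
    rw [show (3 : WithTop ℕ∞) = 2 + 1 by norm_num, contDiffOn_succ_iff_deriv_of_isOpen hsOpen]
    exact ⟨fun x hx => (hd2 x hx).differentiableAt.differentiableWithinAt, by simp,
      c2.congr (fun x hx => (hd2 x hx).deriv)⟩
  have c0 : ContDiffOn ℝ 4 u₀ ({(0:ℝ)}ᶜ) := by
    rw [show (4 : WithTop ℕ∞) = 3 + 1 by norm_num, contDiffOn_succ_iff_deriv_of_isOpen hsOpen]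
    exact ⟨fun x hx => (hd1 x hx).differentiableAt.differentiableWithinAt, by simp,
      c1.congr (fun x hx => (hd1 x hx).deriv)⟩
  -- iterated derivatives of u₀ off 0
  have e1 : ∀ x : ℝ, x ≠ 0 → iteratedDeriv 1 u₀ x = g1 x := by
    intro x hx; rw [iteratedDeriv_one]; exact (hd1 x hx).deriv
  have e2 : ∀ x : ℝ, x ≠ 0 → iteratedDeriv 2 u₀ x = g2 x := by
    intro x hx
    have hev : deriv u₀ =ᶠ[nhds x] g1 :=
      eventuallyEq_of_mem (hsOpen.mem_nhds hx) (fun y hy => (hd1 y hy).deriv)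
    rw [iteratedDeriv_succ, iteratedDeriv_one, hev.deriv_eq]
    exact (hd2 x hx).deriv
  have e3 : ∀ x : ℝ, x ≠ 0 → iteratedDeriv 3 u₀ x = g3 x := by
    intro x hx
    have hev : iteratedDeriv 2 u₀ =ᶠ[nhds x] g2 :=
      eventuallyEq_of_mem (hsOpen.mem_nhds hx) (fun y hy => e2 y hy)
    rw [iteratedDeriv_succ, hev.deriv_eq]
    exact (hd3 x hx).deriv
  have e4 : ∀ x : ℝ, x ≠ 0 → iteratedDeriv 4 u₀ x = g4 x := by
    intro x hx
    have hev : iteratedDeriv 3 u₀ =ᶠ[nhds x] g3 :=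
      eventuallyEq_of_mem (hsOpen.mem_nhds hx) (fun y hy => e3 y hy)
    rw [iteratedDeriv_succ, hev.deriv_eq]
    exact (hd4 x hx).deriv
  -- generic index function
  set G : ℕ → ℝ → ℝ := fun k => match k with
    | 0 => u₀ | 1 => g1 | 2 => g2 | 3 => g3 | _ => g4 with hGdef
  have eG : ∀ k : ℕ, k ≤ 4 → ∀ x : ℝ, x ≠ 0 → iteratedDeriv k u₀ x = G k x := by
    intro k hk x hx
    interval_cases k
    · simp [hGdef]
    · exact e1 x hx
    · exact e2 x hx
    · exact e3 x hx
    · exact e4 x hx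
  -- the uniform bound
  obtain ⟨M₀, hM₀⟩ := hbdd
  set M : ℝ := max M₀ 1 with hMdef
  have hM1 : (1:ℝ) ≤ M := le_max_right _ _
  have hMpos : (0:ℝ) < M := lt_of_lt_of_le one_pos hM1
  have hGb : ∀ k : ℕ, k ≤ 4 → ∀ x : ℝ, x ≠ 0 → |G k x| ≤ M := by
    intro k hk x hx
    interval_cases k
    · exact le_trans (hM₀ x hx).1 (le_max_left _ _)
    · exact le_trans (hM₀ x hx).2.1 (le_max_left _ _)
    · exact le_trans (hM₀ x hx).2.2.1 (le_max_left _ _)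
    · exact le_trans (hM₀ x hx).2.2.2.1 (le_max_left _ _)
    · exact le_trans (hM₀ x hx).2.2.2.2 (le_max_left _ _)
  have hMu0 : |u₀ 0| ≤ M := by
    have ht : Tendsto (fun y => |u₀ y|) (nhdsWithin 0 ({(0:ℝ)}ᶜ)) (nhds |u₀ 0|) :=
      (hcont.tendsto.mono_left nhdsWithin_le_nhds).abs
    refine le_of_tendsto ht ?_
    filter_upwards [self_mem_nhdsWithin] with y hy
    exact hGb 0 (by norm_num) y hy
  have hmvt : ∀ x : ℝ, |u₀ x - u₀ 0| ≤ M * |x| :=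
    mvt_abs hcont hd1 (fun y hy => hGb 1 (by norm_num) y hy)
  -- the bump function and its derivative bounds
  set φ : ContDiffBump (0:ℝ) := ⟨1, 2, one_pos, one_lt_two⟩ with hφdef
  have hφsupp : ∀ k : ℕ, HasCompactSupport (iteratedDeriv k (φ : ℝ → ℝ)) := by
    intro k; induction k with
    | zero => simpa [iteratedDeriv_zero] using φ.hasCompactSupport
    | succ k ih => rw [iteratedDeriv_succ]; exact ih.deriv
  have hφcont : ∀ k : ℕ, Continuous (iteratedDeriv k (φ : ℝ → ℝ)) := by
    intro k
    exact ((φ.contDiff (n := ((k+1:ℕ) : ℕ∞))).differentiable_iteratedDeriv k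
      (by exact_mod_cast k.lt_succ_self)).continuous
  obtain ⟨K0, hK0⟩ := (hφcont 0).bounded_above_of_compact_support (hφsupp 0)
  obtain ⟨K1, hK1⟩ := (hφcont 1).bounded_above_of_compact_support (hφsupp 1)
  obtain ⟨K2, hK2⟩ := (hφcont 2).bounded_above_of_compact_support (hφsupp 2)
  obtain ⟨K3, hK3⟩ := (hφcont 3).bounded_above_of_compact_support (hφsupp 3)
  obtain ⟨K4, hK4⟩ := (hφcont 4).bounded_above_of_compact_support (hφsupp 4)
  set K : ℝ := max 1 (max K0 (max K1 (max K2 (max K3 K4)))) with hKdef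
  have hK1' : (1:ℝ) ≤ K := le_max_left _ _
  have hKpos : (0:ℝ) < K := lt_of_lt_of_le one_pos hK1'
  have hKb : ∀ k : ℕ, k ≤ 4 → ∀ y : ℝ, |iteratedDeriv k (φ : ℝ → ℝ) y| ≤ K := by
    intro k hk y
    interval_cases k
    · exact le_trans (Real.norm_eq_abs _ ▸ hK0 y)
        (le_trans (le_max_left _ _) (le_max_right _ _))
    · exact le_trans (Real.norm_eq_abs _ ▸ hK1 y)
        (le_trans (le_trans (le_max_left _ _) (le_max_right _ _)) (le_max_right _ _))
    · exact le_trans (Real.norm_eq_abs _ ▸ hK2 y)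
        (le_trans (le_trans (le_trans (le_max_left _ _) (le_max_right _ _)) (le_max_right _ _))
          (le_max_right _ _))
    · exact le_trans (Real.norm_eq_abs _ ▸ hK3 y)
        (le_trans (le_trans (le_trans (le_trans (le_max_left _ _) (le_max_right _ _))
          (le_max_right _ _)) (le_max_right _ _)) (le_max_right _ _))
    · exact le_trans (Real.norm_eq_abs _ ▸ hK4 y)
        (le_trans (le_trans (le_trans (le_trans (le_max_right _ _) (le_max_right _ _))
          (le_max_right _ _)) (le_max_right _ _)) (le_max_right _ _))
  -- the constant
  refine ⟨136 * K * M, by positivity, ?_⟩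
  rintro δ ⟨hδ0, hδ1⟩
  have hδne : δ ≠ 0 := hδ0.ne'
  have hinv1 : (1:ℝ) ≤ δ⁻¹ := by
    have := inv_anti₀ hδ0 hδ1.le
    simpa using this
  have hinv0 : (0:ℝ) < δ⁻¹ := inv_pos.mpr hδ0
  -- the rescaled bump
  set ψ : ℝ → ℝ := fun y => (φ : ℝ → ℝ) (δ⁻¹ * y) with hψdef
  have hψ1 : ∀ x : ℝ, |x| ≤ δ → ψ x = 1 := by
    intro x hx
    refine φ.one_of_mem_closedBall ?_
    rw [Metric.mem_closedBall, Real.dist_eq, sub_zero, abs_mul, abs_inv, abs_of_pos hδ0]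
    calc δ⁻¹ * |x| ≤ δ⁻¹ * δ := by gcongr
      _ = 1 := inv_mul_cancel₀ hδne
  have hψ0 : ∀ x : ℝ, 2 * δ ≤ |x| → ψ x = 0 := by
    intro x hx
    refine φ.zero_of_le_dist ?_
    rw [Real.dist_eq, sub_zero, abs_mul, abs_inv, abs_of_pos hδ0]
    show (2:ℝ) ≤ δ⁻¹ * |x|
    calc (2:ℝ) = δ⁻¹ * (2 * δ) := by field_simp
      _ ≤ δ⁻¹ * |x| := by gcongr
  have hψle1 : ∀ x : ℝ, |ψ x| ≤ 1 := by
    intro x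
    rw [abs_of_nonneg (φ.nonneg)]
    exact φ.le_one
  have hψtop : ContDiff ℝ (((⊤:ℕ∞)) : WithTop ℕ∞) ψ := by
    rw [hψdef]
    exact ContDiff.contDiffBump contDiff_const contDiff_const contDiff_const
      (contDiff_const.mul contDiff_id)
  have hψ4 : ContDiff ℝ 4 ψ := hψtop.of_le (by norm_cast)
  have hψb : ∀ k : ℕ, k ≤ 4 → ∀ x : ℝ, |iteratedDeriv k ψ x| ≤ K * δ⁻¹ ^ k := by
    intro k hk x
    have hφk : ContDiff ℝ k (φ : ℝ → ℝ) :=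
      (φ.contDiff (n := (⊤:ℕ∞))).of_le (by exact_mod_cast (le_top : (k:ℕ∞) ≤ ⊤))
    rw [hψdef, iteratedDeriv_comp_const_mul hφk δ⁻¹, abs_mul, abs_pow, abs_inv, abs_of_pos hδ0]
    rw [mul_comm]
    gcongr
    exact hKb k hk _
  -- the approximation
  set uδ : ℝ → ℝ := fun y => u₀ y + ψ y * (u₀ 0 - u₀ y) with huδdef
  have huδsmall : ∀ x : ℝ, |x| ≤ δ → uδ x = u₀ 0 := by
    intro x hx; rw [huδdef]; simp only; rw [hψ1 x hx]; ring
  have huδbig : ∀ x : ℝ, 2 * δ ≤ |x| → uδ x = u₀ x := by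
    intro x hx; rw [huδdef]; simp only; rw [hψ0 x hx]; ring
  -- global smoothness
  have cuδ : ContDiffOn ℝ 4 uδ ({(0:ℝ)}ᶜ) :=
    c0.add ((hψ4.contDiffOn).mul (contDiffOn_const.sub c0))
  have hsmooth : ContDiff ℝ 4 uδ := by
    rw [contDiff_iff_contDiffAt]
    intro x
    by_cases hx : x = 0
    · subst hx
      refine (contDiffAt_const (c := u₀ 0)).congr_of_eventuallyEq ?_
      filter_upwards [Metric.ball_mem_nhds (0:ℝ) hδ0] with y hy
      rw [Metric.mem_ball, Real.dist_eq, sub_zero] at hy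
      exact huδsmall y hy.le
    · exact cuδ.contDiffAt (hsOpen.mem_nhds hx)
  -- derivatives vanish near 0
  have hZero : ∀ k : ℕ, 1 ≤ k → ∀ x : ℝ, |x| < δ → iteratedDeriv k uδ x = 0 := by
    intro k hk x hx
    have hV : IsOpen {y : ℝ | |y| < δ} := isOpen_lt continuous_abs continuous_const
    have hev : uδ =ᶠ[nhds x] (fun _ => u₀ 0) :=
      eventuallyEq_of_mem (hV.mem_nhds hx) (fun y hy => huδsmall y (le_of_lt hy))
    rw [(iterDeriv_congr_nhds hev k).eq_of_nhds]
    obtain ⟨m, rfl⟩ := Nat.exists_eq_add_of_le hk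
    rw [add_comm]
    exact iteratedDeriv_const'' m (u₀ 0) x
  -- derivatives agree with G far from 0
  have hAbove : ∀ k : ℕ, k ≤ 4 → ∀ x : ℝ, 2 * δ < |x| → iteratedDeriv k uδ x = G k x := by
    intro k hk x hx
    have hx0 : x ≠ 0 := by
      intro h; rw [h, abs_zero] at hx; linarith
    have hU : IsOpen {y : ℝ | 2 * δ < |y|} := isOpen_lt continuous_const continuous_abs
    have hev : uδ =ᶠ[nhds x] u₀ :=
      eventuallyEq_of_mem (hU.mem_nhds hx) (fun y hy => huδbig y (le_of_lt hy))
    rw [(iterDeriv_congr_nhds hev k).eq_of_nhds]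
    exact eG k hk x hx0
  -- splitting of the iterated derivative
  have hsplit : ∀ k : ℕ, k ≤ 4 → ∀ x : ℝ, x ≠ 0 →
      iteratedDeriv k uδ x = iteratedDeriv k u₀ x
        + iteratedDeriv k (fun y => ψ y * (u₀ 0 - u₀ y)) x := by
    intro k hk x hx
    have hxs : x ∈ ({(0:ℝ)}ᶜ : Set ℝ) := hx
    have hcast : (k : WithTop ℕ∞) ≤ (4 : WithTop ℕ∞) := by exact_mod_cast hk
    have h1 := iteratedDerivWithin_add (𝕜 := ℝ) (f := u₀)
      (g := fun y => ψ y * (u₀ 0 - u₀ y)) (n := k) (s := {(0:ℝ)}ᶜ) hxs hsOpen.uniqueDiffOn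
      (c0.of_le hcast x hxs) (((hψ4.contDiffOn).mul (contDiffOn_const.sub c0)).of_le hcast x hxs)
    simp only [iterDerivWithin_isOpen' hsOpen hxs] at h1
    exact h1
  -- Leibniz bound on the product part
  have hpbound : ∀ k : ℕ, 1 ≤ k → k ≤ 4 → ∀ x : ℝ, x ≠ 0 → |x| ≤ 2 * δ →
      |iteratedDeriv k (fun y => ψ y * (u₀ 0 - u₀ y)) x| ≤ 32 * (K * M) * (δ * δ⁻¹ ^ k) := by
    intro k hk1 hk x hx hx2
    have hxs : x ∈ ({(0:ℝ)}ᶜ : Set ℝ) := hx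
    have hcast : (k : WithTop ℕ∞) ≤ (4 : WithTop ℕ∞) := by exact_mod_cast hk
    have hL := norm_iteratedFDerivWithin_mul_le (𝕜 := ℝ) (f := ψ)
      (g := fun y => u₀ 0 - u₀ y) (s := {(0:ℝ)}ᶜ) (N := 4) (hψ4.contDiffOn)
      (contDiffOn_const.sub c0) hsOpen.uniqueDiffOn hxs hcast
    have hnorm : |iteratedDeriv k (fun y => ψ y * (u₀ 0 - u₀ y)) x|
        = ‖iteratedFDerivWithin ℝ k (fun y => ψ y * (u₀ 0 - u₀ y)) ({(0:ℝ)}ᶜ) x‖ := by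
      rw [norm_iteratedFDerivWithin_eq_norm_iteratedDerivWithin,
        iterDerivWithin_isOpen' hsOpen hxs, Real.norm_eq_abs]
    rw [hnorm]
    refine hL.trans ?_
    have hδδ : δ * δ⁻¹ = 1 := mul_inv_cancel₀ hδne
    have hterm : ∀ j ∈ Finset.range (k+1),
        (k.choose j : ℝ) * ‖iteratedFDerivWithin ℝ j ψ ({(0:ℝ)}ᶜ) x‖ *
          ‖iteratedFDerivWithin ℝ (k-j) (fun y => u₀ 0 - u₀ y) ({(0:ℝ)}ᶜ) x‖
        ≤ (k.choose j : ℝ) * (2 * (K * M) * (δ * δ⁻¹ ^ k)) := by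
      intro j hj
      rw [Finset.mem_range, Nat.lt_succ_iff] at hj
      have hψj : ‖iteratedFDerivWithin ℝ j ψ ({(0:ℝ)}ᶜ) x‖ ≤ K * δ⁻¹ ^ j := by
        rw [norm_iteratedFDerivWithin_eq_norm_iteratedDerivWithin,
          iterDerivWithin_isOpen' hsOpen hxs, Real.norm_eq_abs]
        exact hψb j (hj.trans hk) x
      rcases Nat.eq_zero_or_pos (k - j) with hkj | hkj
      · -- j = k : zeroth derivative of the second factor
        have hjk : j = k := by omega
        subst hjk
        rw [Nat.sub_self]
        have h2 : ‖iteratedFDerivWithin ℝ 0 (fun y => u₀ 0 - u₀ y) ({(0:ℝ)}ᶜ) x‖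
            ≤ M * (2 * δ) := by
          rw [norm_iteratedFDerivWithin_eq_norm_iteratedDerivWithin, iteratedDerivWithin_zero,
            Real.norm_eq_abs, abs_sub_comm]
          exact (hmvt x).trans (by gcongr)
        calc (j.choose j : ℝ) * ‖iteratedFDerivWithin ℝ j ψ ({(0:ℝ)}ᶜ) x‖ *
              ‖iteratedFDerivWithin ℝ 0 (fun y => u₀ 0 - u₀ y) ({(0:ℝ)}ᶜ) x‖
            ≤ (j.choose j : ℝ) * (K * δ⁻¹ ^ j) * (M * (2 * δ)) :=
              mul_le_mul (mul_le_mul le_rfl hψj (norm_nonneg _) (by positivity)) h2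
                (norm_nonneg _) (by positivity)
          _ = (j.choose j : ℝ) * (2 * (K * M) * (δ * δ⁻¹ ^ j)) := by ring
      · -- j < k : the second factor is a derivative of u₀
        have hm4 : k - j ≤ 4 := le_trans (Nat.sub_le _ _) hk
        have h2 : ‖iteratedFDerivWithin ℝ (k-j) (fun y => u₀ 0 - u₀ y) ({(0:ℝ)}ᶜ) x‖ ≤ M := by
          rw [norm_iteratedFDerivWithin_eq_norm_iteratedDerivWithin, Real.norm_eq_abs]
          rw [iteratedDerivWithin_const_sub hkj (u₀ 0),
            iteratedDerivWithin_fun_neg u₀, abs_neg,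
            iterDerivWithin_isOpen' hsOpen hxs, eG (k-j) hm4 x hx]
          exact hGb (k-j) hm4 x hx
        have hjk1 : j ≤ k - 1 := by omega
        have hpow : δ⁻¹ ^ j ≤ δ * δ⁻¹ ^ k := by
          obtain ⟨m, rfl⟩ := Nat.exists_eq_add_of_le hk1
          have : δ * δ⁻¹ ^ (1 + m) = δ⁻¹ ^ m := by
            rw [pow_add, pow_one]; field_simp
          rw [this]
          exact pow_le_pow_right₀ hinv1 (by omega)
        calc (k.choose j : ℝ) * ‖iteratedFDerivWithin ℝ j ψ ({(0:ℝ)}ᶜ) x‖ *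
              ‖iteratedFDerivWithin ℝ (k-j) (fun y => u₀ 0 - u₀ y) ({(0:ℝ)}ᶜ) x‖
            ≤ (k.choose j : ℝ) * (K * δ⁻¹ ^ j) * M :=
              mul_le_mul (mul_le_mul le_rfl hψj (norm_nonneg _) (by positivity)) h2
                (norm_nonneg _) (by positivity)
          _ ≤ (k.choose j : ℝ) * (K * (δ * δ⁻¹ ^ k)) * M := by gcongr
          _ ≤ (k.choose j : ℝ) * (2 * (K * M) * (δ * δ⁻¹ ^ k)) := by
              have h0 : (0:ℝ) ≤ (k.choose j : ℝ) * (K * M) * (δ * δ⁻¹ ^ k) := by positivity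
              nlinarith [h0]
    have hsum0 : (0:ℝ) ≤ 2 * (K * M) * (δ * δ⁻¹ ^ k) := by positivity
    calc (∑ j ∈ Finset.range (k+1), (k.choose j : ℝ) *
            ‖iteratedFDerivWithin ℝ j ψ ({(0:ℝ)}ᶜ) x‖ *
            ‖iteratedFDerivWithin ℝ (k-j) (fun y => u₀ 0 - u₀ y) ({(0:ℝ)}ᶜ) x‖)
        ≤ ∑ j ∈ Finset.range (k+1), (k.choose j : ℝ) * (2 * (K * M) * (δ * δ⁻¹ ^ k)) :=
          Finset.sum_le_sum hterm
      _ = (2:ℝ) ^ k * (2 * (K * M) * (δ * δ⁻¹ ^ k)) := by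
          rw [← Finset.sum_mul]
          congr 1
          rw [← Nat.cast_sum, Nat.sum_range_choose]
          push_cast; ring
      _ ≤ (2:ℝ) ^ 4 * (2 * (K * M) * (δ * δ⁻¹ ^ k)) := by
          gcongr
          · norm_num
      _ = 32 * (K * M) * (δ * δ⁻¹ ^ k) := by norm_num; ring
  -- the unified pointwise estimate
  have hAnn : ∀ k : ℕ, k ≤ 4 → ∀ x : ℝ, x ≠ 0 → |x| ≤ 2 * δ →
      |G k x - iteratedDeriv k uδ x| ≤ 32 * (K * M) * (δ * δ⁻¹ ^ k) := by
    intro k hk x hx hx2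
    rcases Nat.eq_zero_or_pos k with hk0 | hk1
    · subst hk0
      have : G 0 x - iteratedDeriv 0 uδ x = -(ψ x * (u₀ 0 - u₀ x)) := by
        rw [iteratedDeriv_zero, huδdef]
        show u₀ x - (u₀ x + ψ x * (u₀ 0 - u₀ x)) = _
        ring
      rw [this, abs_neg, abs_mul, pow_zero]
      calc |ψ x| * |u₀ 0 - u₀ x| ≤ 1 * (M * (2 * δ)) := by
            refine mul_le_mul (hψle1 x) ?_ (abs_nonneg _) one_pos.le
            rw [abs_sub_comm]
            exact (hmvt x).trans (by gcongr)
        _ ≤ 32 * (K * M) * (δ * 1) := by nlinarith [mul_pos hKpos hMpos, mul_pos hMpos hδ0]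
    · rw [hsplit k hk x hx, eG k hk x hx]
      have : G k x - (G k x + iteratedDeriv k (fun y => ψ y * (u₀ 0 - u₀ y)) x)
          = -(iteratedDeriv k (fun y => ψ y * (u₀ 0 - u₀ y)) x) := by ring
      rw [this, abs_neg]
      exact hpbound k hk1 hk x hx hx2
  -- integral helper
  have main : ∀ (F : ℝ → ℝ) (b : ℝ),
      (∀ x : ℝ, x ∉ Set.Icc (-(2*δ)) (2*δ) → F x = 0) →
      (∀ x : ℝ, x ≠ 0 → x ∈ Set.Icc (-(2*δ)) (2*δ) → |F x| ≤ b) →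
      (∫ x : ℝ, |F x|) ≤ b * (4 * δ) := by
    intro F b h0 hle
    have heq : (∫ x : ℝ, |F x|) = ∫ x in Set.Icc (-(2*δ)) (2*δ), |F x| :=
      (setIntegral_eq_integral_of_forall_compl_eq_zero
        (fun x hx => by rw [h0 x hx, abs_zero])).symm
    rw [heq]
    have hae : ∀ᵐ (x : ℝ), x ∈ Set.Icc (-(2*δ)) (2*δ) → ‖|F x|‖ ≤ b := by
      have hne : ∀ᵐ (x : ℝ), x ≠ 0 := by
        rw [ae_iff]
        have : {x : ℝ | ¬ x ≠ 0} = {0} := by ext y; simp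
        rw [this]
        exact measure_singleton 0
      filter_upwards [hne] with x hx hmem
      rw [Real.norm_eq_abs, abs_abs]
      exact hle x hx hmem
    have hfin : volume (Set.Icc (-(2*δ)) (2*δ)) < ⊤ := by
      rw [Real.volume_Icc]; exact ENNReal.ofReal_lt_top
    have := norm_setIntegral_le_of_norm_le_const_ae' hfin hae
    calc (∫ x in Set.Icc (-(2*δ)) (2*δ), |F x|)
        ≤ ‖∫ x in Set.Icc (-(2*δ)) (2*δ), |F x|‖ := le_abs_self _
      _ ≤ b * (volume (Set.Icc (-(2*δ)) (2*δ))).toReal := this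
      _ = b * (4 * δ) := by
          rw [Real.volume_Icc, ENNReal.toReal_ofReal (by linarith)]
          ring_nf
  -- vanishing of the differences outside the interval
  have hvanish : ∀ k : ℕ, k ≤ 4 → ∀ x : ℝ, x ∉ Set.Icc (-(2*δ)) (2*δ) →
      G k x - iteratedDeriv k uδ x = 0 := by
    intro k hk x hx
    rw [Set.mem_Icc, not_and_or] at hx
    have habs : 2 * δ < |x| := by
      rcases hx with h | h
      · push_neg at h; rw [abs_of_neg (by linarith)]; linarith
      · push_neg at h; rw [abs_of_pos (by linarith)]; linarith
    rw [hAbove k hk x habs, sub_self]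
  have hmem_abs : ∀ x : ℝ, x ∈ Set.Icc (-(2*δ)) (2*δ) → |x| ≤ 2 * δ := by
    intro x hx
    rw [Set.mem_Icc] at hx
    rw [abs_le]; exact ⟨hx.1, hx.2⟩
  -- main integral bounds, for each k
  have hInt : ∀ k : ℕ, k ≤ 4 →
      (∫ x : ℝ, |G k x - iteratedDeriv k uδ x|) ≤ 32 * (K * M) * (δ * δ⁻¹ ^ k) * (4 * δ) := by
    intro k hk
    exact main _ _ (hvanish k hk) (fun x hx hmem => hAnn k hk x hx (hmem_abs x hmem))
  -- boundedness of all the iterated derivatives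
  have hBdd : ∀ i : ℕ, i ≤ 4 → ∃ B : ℝ, ∀ x : ℝ, |iteratedDeriv i uδ x| ≤ B := by
    intro i hi
    refine ⟨M + 32 * (K * M) * (δ * δ⁻¹ ^ i), ?_⟩
    intro x
    have hb0 : (0:ℝ) ≤ 32 * (K * M) * (δ * δ⁻¹ ^ i) := by positivity
    by_cases hx0 : x = 0
    · subst hx0
      rcases Nat.eq_zero_or_pos i with hi0 | hi1
      · subst hi0
        rw [iteratedDeriv_zero, huδsmall 0 (by rw [abs_zero]; exact hδ0.le)]
        linarith [hMu0]
      · rw [hZero i hi1 0 (by rw [abs_zero]; exact hδ0)]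
        rw [abs_zero]
        linarith [hMpos]
    · by_cases hx2 : 2 * δ < |x|
      · rw [hAbove i hi x hx2]
        linarith [hGb i hi x hx0]
      · push_neg at hx2
        have h1 := hAnn i hi x hx0 hx2
        have h2 := hGb i hi x hx0
        have := abs_sub_abs_le_abs_sub (iteratedDeriv i uδ x) (G i x)
        rw [abs_sub_comm] at this
        linarith
  -- assemble everything
  have harith : ∀ t : ℝ, 0 ≤ t → 128 * (K * M) * t ≤ 136 * K * M * t := by
    intro t ht
    have h1 : (0:ℝ) ≤ K * M * t := mul_nonneg (mul_nonneg hKpos.le hMpos.le) ht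
    nlinarith [h1]
  have hδδ : δ * δ⁻¹ = 1 := mul_inv_cancel₀ hδne
  refine ⟨uδ, hsmooth, hBdd, (fun x hx => huδbig x hx.le), huδsmall, ?_, ?_, ?_, ?_, ?_⟩
  · -- k = 0
    have h := hInt 0 (by norm_num)
    simp only [iteratedDeriv_zero] at h
    have h' : (∫ x : ℝ, |u₀ x - uδ x|) ≤ 32 * (K * M) * (δ * δ⁻¹ ^ 0) * (4 * δ) := h
    refine h'.trans ?_
    have heq : 32 * (K * M) * (δ * δ⁻¹ ^ 0) * (4 * δ) = 128 * (K * M) * δ ^ 2 := by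
      rw [pow_zero]; ring
    rw [heq]
    exact harith (δ ^ 2) (sq_nonneg δ)
  · -- k = 1
    have h := hInt 1 (by norm_num)
    simp only [iteratedDeriv_one] at h
    have h' : (∫ x : ℝ, |g1 x - deriv uδ x|) ≤ 32 * (K * M) * (δ * δ⁻¹ ^ 1) * (4 * δ) := h
    refine h'.trans ?_
    have heq : 32 * (K * M) * (δ * δ⁻¹ ^ 1) * (4 * δ) = 128 * (K * M) * δ := by
      rw [pow_one]
      calc 32 * (K * M) * (δ * δ⁻¹) * (4 * δ) = 32 * (K * M) * 1 * (4 * δ) := by rw [hδδ]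
        _ = 128 * (K * M) * δ := by ring
    rw [heq]
    exact harith δ hδ0.le
  · -- k = 2
    have h := hInt 2 (by norm_num)
    have h' : (∫ x : ℝ, |g2 x - iteratedDeriv 2 uδ x|)
        ≤ 32 * (K * M) * (δ * δ⁻¹ ^ 2) * (4 * δ) := h
    refine h'.trans ?_
    have heq : 32 * (K * M) * (δ * δ⁻¹ ^ 2) * (4 * δ) = 128 * (K * M) * 1 := by
      calc 32 * (K * M) * (δ * δ⁻¹ ^ 2) * (4 * δ)
          = 128 * (K * M) * ((δ * δ⁻¹) * (δ * δ⁻¹)) := by ring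
        _ = 128 * (K * M) * 1 := by rw [hδδ]; ring
    rw [heq]
    have := harith 1 one_pos.le
    linarith
  · -- k = 3
    have h := hInt 3 (by norm_num)
    have h' : (∫ x : ℝ, |g3 x - iteratedDeriv 3 uδ x|)
        ≤ 32 * (K * M) * (δ * δ⁻¹ ^ 3) * (4 * δ) := h
    refine h'.trans ?_
    rw [div_eq_mul_inv]
    have heq : 32 * (K * M) * (δ * δ⁻¹ ^ 3) * (4 * δ) = 128 * (K * M) * δ⁻¹ := by
      calc 32 * (K * M) * (δ * δ⁻¹ ^ 3) * (4 * δ)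
          = 128 * (K * M) * ((δ * δ⁻¹) * (δ * δ⁻¹) * δ⁻¹) := by ring
        _ = 128 * (K * M) * δ⁻¹ := by rw [hδδ]; ring
    rw [heq]
    exact harith δ⁻¹ hinv0.le
  · -- k = 4
    have h := hInt 4 (by norm_num)
    have h' : (∫ x : ℝ, |g4 x - iteratedDeriv 4 uδ x|)
        ≤ 32 * (K * M) * (δ * δ⁻¹ ^ 4) * (4 * δ) := h
    refine h'.trans ?_
    rw [div_eq_mul_inv, ← inv_pow]
    have heq : 32 * (K * M) * (δ * δ⁻¹ ^ 4) * (4 * δ) = 128 * (K * M) * δ⁻¹ ^ 2 := by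
      calc 32 * (K * M) * (δ * δ⁻¹ ^ 4) * (4 * δ)
          = 128 * (K * M) * ((δ * δ⁻¹) * (δ * δ⁻¹) * δ⁻¹ ^ 2) := by ring
        _ = 128 * (K * M) * δ⁻¹ ^ 2 := by rw [hδδ]; ring
    rw [heq]
    exact harith (δ⁻¹ ^ 2) (by positivity)
end
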